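/- arXiv:1308.6555 — 4 statements merged into one kernel-verified Lean document; each statement's English description precedes it below -/
import Mathlib

section
/- Let K and L be locally compact Hausdorff spaces, X a Banach space containing no isomorphic copy of c₀, and T : C₀(K) → C₀(L,X) an isomorphic embedding. Then for every ε > 0 and every y ∈ L, the set K_y(ε) = ⋃_{φ ∈ S_{X*}} { x ∈ K : |T*(φ·δ_y)|({x}) > ε } is finite, where δ_y is the Dirac measure at y, T* is the adjoint of T (with C₀(L,X)* identified with M(L,X*) via the Singer representation), and |·| denotes total variation. -/
open MeasureTheory ZeroAtInfty Topology
open scoped ENNReal NNReal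

/-- `Y` embeds isomorphically into `Z`. -/
def EmbedsIso (Y Z : Type*) [NormedAddCommGroup Y] [NormedSpace ℝ Y]
    [NormedAddCommGroup Z] [NormedSpace ℝ Z] : Prop :=
  ∃ T : Y →L[ℝ] Z, ∃ A > 0, ∀ u, A * ‖u‖ ≤ ‖T u‖

/-- `X` contains an isomorphic copy of `c₀ = C₀(ℕ, ℝ)`. -/
def ContainsC0Copy (X : Type*) [NormedAddCommGroup X] [NormedSpace ℝ X] : Prop :=
  EmbedsIso C₀(ℕ, ℝ) X

/-- Integral of a function against a signed measure, via the Jordan decomposition. -/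
noncomputable def sIntegral {K : Type*} [MeasurableSpace K] (σ : SignedMeasure K)
    (f : K → ℝ) : ℝ :=
  ∫ x, f x ∂σ.toJordanDecomposition.posPart - ∫ x, f x ∂σ.toJordanDecomposition.negPart

section aux

open Set Filter

set_option linter.unusedSectionVars false

instance stmt0_tv_finite {K : Type*} [MeasurableSpace K] (σ : SignedMeasure K) :
    IsFiniteMeasure σ.totalVariation :=
  show IsFiniteMeasure (σ.toJordanDecomposition.posPart + σ.toJordanDecomposition.negPart) from
    inferInstance

lemma rosenthal {α : Type*} [MeasurableSpace α] (ν : ℕ → Measure α) (M : ℝ≥0∞)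
    (hM : ∀ n, ν n Set.univ ≤ M) (hMfin : M ≠ ∞)
    (U : ℕ → Set α) (hU : Pairwise (Function.onFun Disjoint U))
    (hUm : ∀ n, MeasurableSet (U n)) (ε : ℝ≥0∞) (hε : 0 < ε) :
    ∃ S : Set ℕ, S.Infinite ∧ ∀ n ∈ S, ν n (⋃ m ∈ S \ {n}, U m) ≤ ε := by
  by_contra hcon
  push_neg at hcon
  have hbad : ∀ S : Set ℕ, S.Infinite → ∃ n ∈ S, ε < ν n (⋃ m ∈ S \ {n}, U m) := by
    intro S hS
    obtain ⟨n, hn, hlt⟩ := hcon S hS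
    exact ⟨n, hn, hlt⟩
  -- the key induction
  have claim : ∀ k : ℕ, ∃ (I : Set ℕ) (F : ℕ → Set α), I.Infinite ∧
      (∀ i, MeasurableSet (F i)) ∧
      (∀ i ∈ I, ∀ j ∈ I, Disjoint (F i) (U j)) ∧
      (∀ i ∈ I, (k : ℝ≥0∞) * ε ≤ ν i (F i)) := by
    intro k
    induction k with
    | zero =>
      exact ⟨Set.univ, fun _ => ∅, Set.infinite_univ, fun _ => MeasurableSet.empty,
        fun i _ j _ => disjoint_bot_left, fun i _ => by simp⟩
    | succ k ih =>
      obtain ⟨I, F, hIinf, hFm, hFd, hFb⟩ := ih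
      -- partition I into countably many infinite pieces
      set g : ℕ ↪ I := hIinf.natEmbedding I with hg
      set A : ℕ → Set ℕ := fun j => Set.range (fun i => (g (Nat.pair j i) : ℕ)) with hA
      have hAinj : ∀ j, Function.Injective (fun i => (g (Nat.pair j i) : ℕ)) := by
        intro j i i' h
        have := Subtype.val_injective h
        have := g.injective this
        exact (Nat.pair_eq_pair.mp this).2
      have hAinf : ∀ j, (A j).Infinite := fun j => Set.infinite_range_of_injective (hAinj j)
      have hAsub : ∀ j, A j ⊆ I := by
        rintro j x ⟨i, rfl⟩
        exact (g (Nat.pair j i)).2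
      have hAdis : ∀ j j' : ℕ, j ≠ j' → ∀ x, x ∈ A j → x ∈ A j' → False := by
        rintro j j' hne x ⟨i, rfl⟩ ⟨i', hx⟩
        have := g.injective (Subtype.val_injective hx)
        exact hne (Nat.pair_eq_pair.mp this).1.symm
      -- choose bad points
      have hsel : ∀ j : ℕ, ∃ n ∈ A j, ε < ν n (⋃ m ∈ A j \ {n}, U m) := fun j =>
        hbad (A j) (hAinf j)
      choose n hnA hnb using hsel
      have hninj : Function.Injective n := by
        intro j j' h
        by_contra hne
        exact hAdis j j' hne (n j) (hnA j) (h ▸ hnA j')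
      set chunk : ℕ → Set α := fun j => ⋃ m ∈ A j \ {n j}, U m with hchunk
      have hchunkm : ∀ j, MeasurableSet (chunk j) := by
        intro j
        exact MeasurableSet.biUnion (Set.to_countable _) (fun m _ => hUm m)
      classical
      refine ⟨Set.range n, fun i => if h : ∃ j, n j = i then F i ∪ chunk h.choose else ∅,
        Set.infinite_range_of_injective hninj, ?_, ?_, ?_⟩
      · intro i
        by_cases h : ∃ j, n j = i
        · simp only [dif_pos h]; exact (hFm i).union (hchunkm _)
        · simp only [dif_neg h]; exact MeasurableSet.empty
      · rintro i ⟨j, rfl⟩ i' ⟨j', rfl⟩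
        have h : ∃ j0, n j0 = n j := ⟨j, rfl⟩
        simp only [dif_pos h]
        have hj0 : h.choose = j := hninj h.choose_spec
        rw [hj0]
        apply Disjoint.union_left
        · exact hFd _ (hAsub j (hnA j)) _ (hAsub j' (hnA j'))
        · -- chunk j disjoint from U (n j')
          rw [Set.disjoint_left]
          intro a ha ha'
          simp only [chunk, Set.mem_iUnion] at ha
          obtain ⟨m, hm, hma⟩ := ha
          have hmnj' : m ≠ n j' := by
            rcases eq_or_ne j j' with rfl | hjj'
            · exact fun hh => hm.2 (hh ▸ rfl)
            · intro hh
              exact hAdis j j' hjj' m (hm.1) (hh ▸ hnA j')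
          exact Set.disjoint_left.mp (hU hmnj') hma ha'
      · rintro i ⟨j, rfl⟩
        have h : ∃ j0, n j0 = n j := ⟨j, rfl⟩
        simp only [dif_pos h]
        have hj0 : h.choose = j := hninj h.choose_spec
        rw [hj0]
        have hdisj : Disjoint (F (n j)) (chunk j) := by
          rw [Set.disjoint_left]
          intro a ha ha'
          simp only [chunk, Set.mem_iUnion] at ha'
          obtain ⟨m, hm, hma⟩ := ha'
          exact Set.disjoint_left.mp
            (hFd _ (hAsub j (hnA j)) _ (hAsub j (hm.1))) ha hma
        rw [measure_union hdisj (hchunkm j)]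
        have h1 : (k : ℝ≥0∞) * ε ≤ ν (n j) (F (n j)) := hFb _ (hAsub j (hnA j))
        have h2 : ε ≤ ν (n j) (chunk j) := (hnb j).le
        calc ((k + 1 : ℕ) : ℝ≥0∞) * ε = (k : ℝ≥0∞) * ε + ε := by push_cast; ring
        _ ≤ ν (n j) (F (n j)) + ν (n j) (chunk j) := add_le_add h1 h2
  -- contradiction
  rcases eq_or_ne ε ∞ with rfl | hεtop
  · obtain ⟨I, F, hIinf, _, _, hFb⟩ := claim 1
    obtain ⟨i, hi⟩ := hIinf.nonempty
    have := hFb i hi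
    simp only [Nat.cast_one, one_mul] at this
    have h2 : ν i (F i) ≤ M := le_trans (measure_mono (Set.subset_univ _)) (hM i)
    exact hMfin (top_le_iff.mp (this.trans h2))
  · obtain ⟨k, hk⟩ := ENNReal.exists_nat_gt (ENNReal.div_lt_top hMfin hε.ne').ne
    obtain ⟨I, F, hIinf, _, _, hFb⟩ := claim k
    obtain ⟨i, hi⟩ := hIinf.nonempty
    have h1 : (k : ℝ≥0∞) * ε ≤ M :=
      (hFb i hi).trans (le_trans (measure_mono (Set.subset_univ _)) (hM i))
    have h2 : M < (k : ℝ≥0∞) * ε := by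
      exact (ENNReal.div_lt_iff (Or.inl hε.ne') (Or.inl hεtop)).mp hk
    exact absurd h1 (not_le.mpr h2)

lemma exists_separated_subseq {K : Type*} [TopologicalSpace K] [T2Space K] [RegularSpace K]
    (x : ℕ → K) (hx : Function.Injective x) :
    ∃ (n : ℕ → ℕ) (U : ℕ → Set K), Function.Injective n ∧ (∀ k, IsOpen (U k)) ∧
      (∀ k, x (n k) ∈ U k) ∧ Pairwise (Function.onFun Disjoint U) := by
  classical
  have S1 : ∀ R : {S : Set ℕ // S.Infinite}, ∃ q : ℕ × Set K, q.1 ∈ R.1 ∧ IsOpen q.2 ∧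
      x q.1 ∈ q.2 ∧ (({m ∈ R.1 | x m ∉ q.2} \ {q.1}).Infinite) := by
    rintro ⟨R, hR⟩
    set e := hR.natEmbedding R
    have hab : ((e 0 : ℕ) : ℕ) ≠ (e 1 : ℕ) := by
      intro h
      exact absurd (e.injective (Subtype.val_injective h)) (by norm_num)
    obtain ⟨V₁, V₂, hV₁, hV₂, ha, hb, hdis⟩ := t2_separation (hx.ne hab)
    have hcover : R ⊆ {m ∈ R | x m ∉ V₁} ∪ {m ∈ R | x m ∉ V₂} := by
      intro m hm
      by_cases h1 : x m ∈ V₁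
      · exact Or.inr ⟨hm, fun h2 => Set.disjoint_left.mp hdis h1 h2⟩
      · exact Or.inl ⟨hm, h1⟩
    rcases Set.infinite_union.mp (hR.mono hcover) with h | h
    · exact ⟨((e 0 : ℕ), V₁), (e 0).2, hV₁, ha, (h.diff (Set.finite_singleton _))⟩
    · exact ⟨((e 1 : ℕ), V₂), (e 1).2, hV₂, hb, (h.diff (Set.finite_singleton _))⟩
  choose q hmem hopen hxin hinf using S1
  let next : {S : Set ℕ // S.Infinite} → {S : Set ℕ // S.Infinite} :=
    fun R => ⟨{m ∈ R.1 | x m ∉ (q R).2} \ {(q R).1}, hinf R⟩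
  let seq : ℕ → {S : Set ℕ // S.Infinite} := fun k => next^[k] ⟨Set.univ, Set.infinite_univ⟩
  have hseq : ∀ k, seq (k + 1) = next (seq k) := fun k =>
    Function.iterate_succ_apply' next k _
  set n : ℕ → ℕ := fun k => (q (seq k)).1 with hn
  set V : ℕ → Set K := fun k => (q (seq k)).2 with hV
  have hsub : ∀ k, (seq (k+1)).1 ⊆ (seq k).1 := by
    intro k m hm
    rw [hseq k] at hm
    exact hm.1.1
  have hchain : ∀ k j, k ≤ j → (seq j).1 ⊆ (seq k).1 := by
    intro k j hkj
    induction j with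
    | zero => intro m hm; simpa [Nat.le_zero.mp hkj] using hm
    | succ j ih =>
      rcases Nat.lt_or_ge k (j+1) with h | h
      · exact le_trans (hsub j) (ih (Nat.lt_succ_iff.mp h))
      · have : k = j + 1 := le_antisymm hkj h
        subst this; exact le_refl _
  have hnmem : ∀ k, n k ∈ (seq k).1 := fun k => hmem (seq k)
  have key : ∀ k j, k < j → x (n j) ∉ V k ∧ n j ≠ n k := by
    intro k j hkj
    have h1 : n j ∈ (seq (k+1)).1 := hchain (k+1) j hkj (hnmem j)
    rw [hseq k] at h1
    exact ⟨h1.1.2, h1.2⟩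
  have hninj : Function.Injective n := by
    intro j k h
    rcases lt_trichotomy j k with hlt | he | hlt
    · exact absurd h.symm (key j k hlt).2
    · exact he
    · exact absurd h (key k j hlt).2
  -- second step: regularization
  have hCclosed : ∀ k, IsClosed ((x '' (n '' {j | j < k})) ∪ (V k)ᶜ) := by
    intro k
    exact (Set.Finite.isClosed (((Set.finite_Iio k).image n).image x)).union
      (hopen (seq k)).isClosed_compl
  have hnotin : ∀ k, x (n k) ∉ (x '' (n '' {j | j < k})) ∪ (V k)ᶜ := by
    intro k hk
    rcases hk with hk | hk
    · obtain ⟨_, ⟨j, hj, rfl⟩, hxx⟩ := hk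
      exact absurd (hninj (hx hxx.symm)) (Nat.lt_irrefl _ ∘ (· ▸ hj))
    · exact hk (hxin (seq k))
  have hW : ∀ k, ∃ W : Set K, IsOpen W ∧ x (n k) ∈ W ∧
      closure W ⊆ ((x '' (n '' {j | j < k})) ∪ (V k)ᶜ)ᶜ := by
    intro k
    have hmemnhds : ((x '' (n '' {j | j < k})) ∪ (V k)ᶜ)ᶜ ∈ 𝓝 (x (n k)) :=
      (hCclosed k).isOpen_compl.mem_nhds (hnotin k)
    obtain ⟨t, htn, htc, hts⟩ := exists_mem_nhds_isClosed_subset hmemnhds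
    exact ⟨interior t, isOpen_interior, mem_interior_iff_mem_nhds.mpr htn,
      (closure_minimal interior_subset htc).trans hts⟩
  choose W hWopen hWmem hWcl using hW
  -- x (n j) ∉ closure (W k) for j ≠ k
  have hxWcl : ∀ k j, j ≠ k → x (n j) ∉ closure (W k) := by
    intro k j hjk hmemc
    have := hWcl k hmemc
    rcases lt_trichotomy j k with h | h | h
    · exact this (Or.inl ⟨n j, ⟨j, h, rfl⟩, rfl⟩)
    · exact hjk h
    · exact this (Or.inr (key k j h).1)
  -- disjointify
  set Z : ℕ → Set K := fun k => W k \ ⋃ j ∈ Finset.range k, closure (W j) with hZ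
  refine ⟨n, Z, hninj, ?_, ?_, ?_⟩
  · intro k
    exact (hWopen k).sdiff (isClosed_biUnion_finset (fun j _ => isClosed_closure))
  · intro k
    refine ⟨hWmem k, ?_⟩
    simp only [Set.mem_iUnion]
    rintro ⟨j, hj, hmem⟩
    exact hxWcl j k (by simp at hj; omega) hmem
  · intro j k hjk
    rcases lt_or_gt_of_ne hjk with h | h
    · -- j < k : Z k avoids closure (W j) ⊇ Z j
      rw [Function.onFun, Set.disjoint_left]
      intro a haj hak
      exact hak.2 (Set.mem_biUnion (Finset.mem_range.mpr h) (subset_closure haj.1))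
    · rw [Function.onFun, Set.disjoint_left]
      intro a haj hak
      exact haj.2 (Set.mem_biUnion (Finset.mem_range.mpr h) (subset_closure hak.1))

section analysis

variable {K : Type*} [TopologicalSpace K] [LocallyCompactSpace K] [T2Space K]
  [MeasurableSpace K] [BorelSpace K]

set_option linter.unusedSectionVars false

/-- compactly supported continuous function as a C₀ function -/
noncomputable def toC0 (g : C(K, ℝ)) (hg : HasCompactSupport ⇑g) : C₀(K, ℝ) :=
  ⟨g, hg.is_zero_at_infty⟩

@[simp] lemma toC0_apply (g : C(K, ℝ)) (hg : HasCompactSupport ⇑g) (x : K) :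
    toC0 g hg x = g x := rfl

lemma c0_norm_le (f : C₀(K, ℝ)) (C : ℝ) (hC : 0 ≤ C) (h : ∀ x, |f x| ≤ C) : ‖f‖ ≤ C := by
  rw [← ZeroAtInftyContinuousMap.norm_toBCF_eq_norm]
  exact BoundedContinuousFunction.norm_le hC |>.mpr h

lemma c0_apply_le_norm (f : C₀(K, ℝ)) (x : K) : |f x| ≤ ‖f‖ := by
  rw [← ZeroAtInftyContinuousMap.norm_toBCF_eq_norm]
  exact f.toBCF.norm_coe_le_norm x

lemma c0_integrable (f : C₀(K, ℝ)) (m : Measure K) [IsFiniteMeasure m] :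
    Integrable ⇑f m := f.toBCF.integrable m

lemma meas_le_integral (m : Measure K) [IsFiniteMeasure m] {s : Set K}
    (hsm : MeasurableSet s) (g : K → ℝ) (hint : Integrable g m)
    (hnn : ∀ x, 0 ≤ g x) (hone : ∀ x ∈ s, g x = 1) :
    (m s).toReal ≤ ∫ x, g x ∂m := by
  have h1 : ∫ x, Set.indicator s (fun _ => (1:ℝ)) x ∂m = (m s).toReal := by
    rw [integral_indicator_const (1:ℝ) hsm]; simp [Measure.real]
  rw [← h1]
  apply integral_mono ((integrable_const (1:ℝ)).indicator hsm) hint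
  intro x
  by_cases hx : x ∈ s
  · simp [Set.indicator_of_mem hx, hone x hx]
  · simp only [Set.indicator_of_notMem hx]
    exact hnn x

lemma integral_le_meas (m : Measure K) [IsFiniteMeasure m] {V : Set K}
    (hVm : MeasurableSet V) (g : K → ℝ) (hint : Integrable g m)
    (hle : ∀ x, g x ≤ 1) (hzero : ∀ x ∉ V, g x ≤ 0) :
    ∫ x, g x ∂m ≤ (m V).toReal := by
  have h1 : ∫ x, Set.indicator V (fun _ => (1:ℝ)) x ∂m = (m V).toReal := by
    rw [integral_indicator_const (1:ℝ) hVm]; simp [Measure.real]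
  rw [← h1]
  apply integral_mono hint ((integrable_const (1:ℝ)).indicator hVm)
  intro x
  by_cases hx : x ∈ V
  · simp only [Set.indicator_of_mem hx]
    exact hle x
  · simp only [Set.indicator_of_notMem hx]
    exact hzero x hx

lemma variation_le_opNorm (σ : SignedMeasure K) (hreg : σ.totalVariation.Regular)
    (C : ℝ) (hC : 0 ≤ C) (hb : ∀ f : C₀(K, ℝ), |sIntegral σ ⇑f| ≤ C * ‖f‖) :
    σ.totalVariation Set.univ ≤ ENNReal.ofReal C := by
  set pos := σ.toJordanDecomposition.posPart with hpos
  set neg := σ.toJordanDecomposition.negPart with hneg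
  have hν : σ.totalVariation = pos + neg := rfl
  haveI : IsFiniteMeasure σ.totalVariation := by rw [hν]; infer_instance
  obtain ⟨A, hAm, hA1, hA2⟩ := σ.toJordanDecomposition.mutuallySingular
  have main : ∀ δ : ℝ, 0 < δ → (σ.totalVariation Set.univ).toReal ≤ C + 4 * δ := by
    intro δ hδ
    have hδ0 : ENNReal.ofReal δ ≠ 0 := by simp [hδ]
    obtain ⟨C₁, hC₁A, hC₁c, hC₁⟩ := (hAm.compl).exists_isCompact_lt_add
      (measure_ne_top σ.totalVariation Aᶜ) (ε := ENNReal.ofReal δ) hδ0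
    obtain ⟨C₂, hC₂A, hC₂c, hC₂⟩ := hAm.exists_isCompact_lt_add
      (measure_ne_top σ.totalVariation A) (ε := ENNReal.ofReal δ) hδ0
    obtain ⟨V₁, hV₁s, hV₁o, hV₁⟩ := Set.exists_isOpen_lt_of_lt (μ := σ.totalVariation) C₁ _
      (ENNReal.lt_add_right (measure_ne_top _ _) hδ0)
    obtain ⟨V₂, hV₂s, hV₂o, hV₂⟩ := Set.exists_isOpen_lt_of_lt (μ := σ.totalVariation) C₂ _
      (ENNReal.lt_add_right (measure_ne_top _ _) hδ0)
    have hνC₁ : σ.totalVariation C₁ = pos C₁ := by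
      have : neg C₁ = 0 := le_antisymm (le_trans (measure_mono hC₁A) hA2.le) zero_le
      rw [hν]; simp [Measure.add_apply, this]
    have hνC₂ : σ.totalVariation C₂ = neg C₂ := by
      have : pos C₂ = 0 := le_antisymm (le_trans (measure_mono hC₂A) hA1.le) zero_le
      rw [hν]; simp [Measure.add_apply, this]
    have hnegV₁ : neg V₁ < ENNReal.ofReal δ := by
      have h1 : pos C₁ + neg V₁ ≤ σ.totalVariation V₁ := by
        rw [hν, Measure.add_apply]
        exact add_le_add (measure_mono hV₁s) le_rfl
      have h2 : σ.totalVariation V₁ < pos C₁ + ENNReal.ofReal δ := by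
        rwa [hνC₁] at hV₁
      exact (ENNReal.add_lt_add_iff_left (measure_ne_top pos C₁)).mp (lt_of_le_of_lt h1 h2)
    have hposV₂ : pos V₂ < ENNReal.ofReal δ := by
      have h1 : neg C₂ + pos V₂ ≤ σ.totalVariation V₂ := by
        rw [hν, Measure.add_apply, add_comm (pos V₂)]
        exact add_le_add (measure_mono hV₂s) le_rfl
      have h2 : σ.totalVariation V₂ < neg C₂ + ENNReal.ofReal δ := by
        rwa [hνC₂] at hV₂
      exact (ENNReal.add_lt_add_iff_left (measure_ne_top neg C₂)).mp (lt_of_le_of_lt h1 h2)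
    have hposU : pos Set.univ < pos C₁ + ENNReal.ofReal δ := by
      have h0 : pos Set.univ ≤ σ.totalVariation Aᶜ := by
        have he : pos Set.univ = pos Aᶜ := by
          have := measure_add_measure_compl (μ := pos) hAm
          rw [hA1, zero_add] at this
          exact this.symm
        rw [he, hν, Measure.add_apply]
        exact le_add_right le_rfl
      calc pos Set.univ ≤ σ.totalVariation Aᶜ := h0
        _ < σ.totalVariation C₁ + ENNReal.ofReal δ := hC₁
        _ = pos C₁ + ENNReal.ofReal δ := by rw [hνC₁]
    have hnegU : neg Set.univ < neg C₂ + ENNReal.ofReal δ := by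
      have h0 : neg Set.univ ≤ σ.totalVariation A := by
        have he : neg Set.univ = neg A := by
          have := measure_add_measure_compl (μ := neg) hAm
          rw [hA2, add_zero] at this
          exact this.symm
        rw [he, hν, Measure.add_apply]
        exact le_add_left le_rfl
      calc neg Set.univ ≤ σ.totalVariation A := h0
        _ < σ.totalVariation C₂ + ENNReal.ofReal δ := hC₂
        _ = neg C₂ + ENNReal.ofReal δ := by rw [hνC₂]
    obtain ⟨g₁, hg₁one, hg₁zero, hg₁supp, hg₁mem⟩ :=
      exists_continuous_one_zero_of_isCompact hC₁c hV₁o.isClosed_compl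
        (disjoint_compl_right_iff_subset.mpr hV₁s)
    obtain ⟨g₂, hg₂one, hg₂zero, hg₂supp, hg₂mem⟩ :=
      exists_continuous_one_zero_of_isCompact hC₂c hV₂o.isClosed_compl
        (disjoint_compl_right_iff_subset.mpr hV₂s)
    set f : C₀(K, ℝ) := toC0 g₁ hg₁supp - toC0 g₂ hg₂supp with hf
    have hfle : ‖f‖ ≤ 1 := by
      apply c0_norm_le _ _ zero_le_one
      intro x
      have h1 := hg₁mem x
      have h2 := hg₂mem x
      simp only [hf, ZeroAtInftyContinuousMap.sub_apply, toC0_apply]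
      rw [abs_le]
      exact ⟨by nlinarith [h1.1, h1.2, h2.1, h2.2], by nlinarith [h1.1, h1.2, h2.1, h2.2]⟩
    have hint1 : ∀ (m : Measure K) [IsFiniteMeasure m], Integrable ⇑g₁ m :=
      fun m _ => g₁.continuous.integrable_of_hasCompactSupport hg₁supp
    have hint2 : ∀ (m : Measure K) [IsFiniteMeasure m], Integrable ⇑g₂ m :=
      fun m _ => g₂.continuous.integrable_of_hasCompactSupport hg₂supp
    -- the four integral bounds
    have l1 : (pos C₁).toReal ≤ ∫ x, g₁ x ∂pos :=
      meas_le_integral pos hC₁c.measurableSet _ (hint1 pos) (fun x => (hg₁mem x).1)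
        (fun x hx => hg₁one hx)
    have l4 : (neg C₂).toReal ≤ ∫ x, g₂ x ∂neg :=
      meas_le_integral neg hC₂c.measurableSet _ (hint2 neg) (fun x => (hg₂mem x).1)
        (fun x hx => hg₂one hx)
    have l3 : ∫ x, g₁ x ∂neg ≤ (neg V₁).toReal :=
      integral_le_meas neg hV₁o.measurableSet _ (hint1 neg) (fun x => (hg₁mem x).2)
        (fun x hx => le_of_eq (hg₁zero hx))
    have l2 : ∫ x, g₂ x ∂pos ≤ (pos V₂).toReal :=
      integral_le_meas pos hV₂o.measurableSet _ (hint2 pos) (fun x => (hg₂mem x).2)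
        (fun x hx => le_of_eq (hg₂zero hx))
    -- compute sIntegral of f
    have hfs : sIntegral σ ⇑f =
        (∫ x, g₁ x ∂pos - ∫ x, g₂ x ∂pos) - (∫ x, g₁ x ∂neg - ∫ x, g₂ x ∂neg) := by
      have hcoe : ⇑f = fun x => g₁ x - g₂ x := by
        funext x
        simp [hf, ZeroAtInftyContinuousMap.sub_apply]
      rw [sIntegral, hcoe]
      rw [integral_sub (hint1 pos) (hint2 pos), integral_sub (hint1 neg) (hint2 neg)]
    -- real conversions
    have r1 : (neg V₁).toReal < δ := ENNReal.toReal_lt_of_lt_ofReal hnegV₁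
    have r2 : (pos V₂).toReal < δ := ENNReal.toReal_lt_of_lt_ofReal hposV₂
    have r3 : (pos Set.univ).toReal ≤ (pos C₁).toReal + δ := by
      have := ENNReal.toReal_mono (by finiteness) hposU.le
      rwa [ENNReal.toReal_add (measure_ne_top _ _) ENNReal.ofReal_ne_top,
        ENNReal.toReal_ofReal hδ.le] at this
    have r4 : (neg Set.univ).toReal ≤ (neg C₂).toReal + δ := by
      have := ENNReal.toReal_mono (by finiteness) hnegU.le
      rwa [ENNReal.toReal_add (measure_ne_top _ _) ENNReal.ofReal_ne_top,
        ENNReal.toReal_ofReal hδ.le] at this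
    have r5 : (σ.totalVariation Set.univ).toReal
        = (pos Set.univ).toReal + (neg Set.univ).toReal := by
      rw [hν, Measure.add_apply, ENNReal.toReal_add (measure_ne_top _ _) (measure_ne_top _ _)]
    have hbf := hb f
    have habs : sIntegral σ ⇑f ≤ |sIntegral σ ⇑f| := le_abs_self _
    have hCf : C * ‖f‖ ≤ C := by nlinarith [norm_nonneg f]
    linarith
  have hfin : σ.totalVariation Set.univ ≠ ∞ := measure_ne_top _ _
  have : (σ.totalVariation Set.univ).toReal ≤ C := by
    refine le_of_forall_pos_le_add ?_
    intro ε hε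
    have := main (ε / 4) (by linarith)
    linarith
  rwa [← ENNReal.ofReal_toReal hfin, ENNReal.ofReal_le_ofReal_iff hC]

end analysis

section s
variable {K : Type*} [TopologicalSpace K] [T2Space K] [MeasurableSpace K] [BorelSpace K]
set_option linter.unusedSectionVars false

lemma meas_le_integral' (m : Measure K) [IsFiniteMeasure m] {s : Set K}
    (hsm : MeasurableSet s) (g : K → ℝ) (hint : Integrable g m)
    (hnn : ∀ x, 0 ≤ g x) (hone : ∀ x ∈ s, g x = 1) :
    (m s).toReal ≤ ∫ x, g x ∂m := by
  have h1 : ∫ x, Set.indicator s (fun _ => (1:ℝ)) x ∂m = (m s).toReal := by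
    rw [integral_indicator_const (1:ℝ) hsm]; simp [Measure.real]
  rw [← h1]
  apply integral_mono ((integrable_const (1:ℝ)).indicator hsm) hint
  intro x
  by_cases hx : x ∈ s
  · simp [Set.indicator_of_mem hx, hone x hx]
  · simp only [Set.indicator_of_notMem hx]
    exact hnn x

lemma integral_le_meas' (m : Measure K) [IsFiniteMeasure m] {V : Set K}
    (hVm : MeasurableSet V) (g : K → ℝ) (hint : Integrable g m)
    (hle : ∀ x, g x ≤ 1) (hzero : ∀ x ∉ V, g x ≤ 0) :
    ∫ x, g x ∂m ≤ (m V).toReal := by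
  have h1 : ∫ x, Set.indicator V (fun _ => (1:ℝ)) x ∂m = (m V).toReal := by
    rw [integral_indicator_const (1:ℝ) hVm]; simp [Measure.real]
  rw [← h1]
  apply integral_mono hint ((integrable_const (1:ℝ)).indicator hVm)
  intro x
  by_cases hx : x ∈ V
  · simp only [Set.indicator_of_mem hx]
    exact hle x
  · simp only [Set.indicator_of_notMem hx]
    exact hzero x hx

lemma single_bound (σ : SignedMeasure K) (ε : ℝ) (hε : 0 < ε) (p : K) (O : Set K)
    (hOo : IsOpen O) (hpO : p ∈ O) (f : C₀(K, ℝ))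
    (hf1 : f p = 1) (hf0 : ∀ x, 0 ≤ f x) (hfle : ∀ x, f x ≤ 1)
    (hfz : ∀ x ∉ O, f x = 0)
    (hbig : ENNReal.ofReal ε < σ.totalVariation {p})
    (hann : σ.totalVariation (O \ {p}) ≤ ENNReal.ofReal (ε / 4)) :
    3 * ε / 4 ≤ |sIntegral σ ⇑f| := by
  set pos := σ.toJordanDecomposition.posPart with hpos
  set neg := σ.toJordanDecomposition.negPart with hneg
  have hTV : σ.totalVariation = pos + neg := rfl
  have hpm : MeasurableSet ({p} : Set K) := (isClosed_singleton).measurableSet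
  have hint : ∀ (m : Measure K) [IsFiniteMeasure m], Integrable ⇑f m :=
    fun m _ => f.toBCF.integrable m
  have hOsub : (O \ {p}) ∪ {p} = O :=
    Set.diff_union_of_subset (Set.singleton_subset_iff.mpr hpO)
  obtain ⟨A, hAm, hA1, hA2⟩ := σ.toJordanDecomposition.mutuallySingular
  have hdisj : pos {p} = 0 ∨ neg {p} = 0 := by
    by_cases hp : p ∈ A
    · exact Or.inl (le_antisymm (le_trans (measure_mono (Set.singleton_subset_iff.mpr hp)) hA1.le)
        zero_le)
    · exact Or.inr (le_antisymm (le_trans (measure_mono (Set.singleton_subset_iff.mpr hp)) hA2.le)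
        zero_le)
  have hannR : ∀ m : Measure K, m = pos ∨ m = neg → (m (O \ {p})).toReal ≤ ε / 4 := by
    rintro m hm
    have : m (O \ {p}) ≤ σ.totalVariation (O \ {p}) := by
      rw [hTV, Measure.add_apply]
      rcases hm with rfl | rfl
      · exact le_add_right le_rfl
      · exact le_add_left le_rfl
    exact ENNReal.toReal_le_of_le_ofReal (by linarith) (this.trans hann)
  rcases hdisj with hposp | hnegp
  · -- pos {p} = 0, so neg {p} is big; sIntegral is very negative
    have hbigneg : ε < (neg {p}).toReal := by
      have h1 : σ.totalVariation {p} = neg {p} := by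
        rw [hTV, Measure.add_apply, hposp, zero_add]
      rw [h1] at hbig
      have h2 := (ENNReal.toReal_lt_toReal ENNReal.ofReal_ne_top (measure_ne_top neg {p})).mpr hbig
      rwa [ENNReal.toReal_ofReal hε.le] at h2
    have h2 : (neg {p}).toReal ≤ ∫ x, f x ∂neg :=
      meas_le_integral' neg hpm _ (hint neg) hf0 (fun x hx => by
        rw [Set.mem_singleton_iff.mp hx]; exact hf1)
    have h3 : ∫ x, f x ∂pos ≤ (pos O).toReal :=
      integral_le_meas' pos hOo.measurableSet _ (hint pos) hfle
        (fun x hx => le_of_eq (hfz x hx))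
    have h4 : (pos O).toReal ≤ ε / 4 := by
      have he : pos O = pos (O \ {p}) := by
        conv_lhs => rw [← hOsub]
        rw [measure_union disjoint_sdiff_self_left hpm, hposp, add_zero]
      rw [he]
      exact hannR pos (Or.inl rfl)
    have h5 : sIntegral σ ⇑f ≤ ε / 4 - (neg {p}).toReal := by
      rw [sIntegral, ← hpos, ← hneg]
      linarith
    have := neg_le_abs (sIntegral σ ⇑f)
    linarith
  · -- neg {p} = 0, pos {p} big
    have hbigpos : ε < (pos {p}).toReal := by
      have h1 : σ.totalVariation {p} = pos {p} := by
        rw [hTV, Measure.add_apply, hnegp, add_zero]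
      rw [h1] at hbig
      have h2 := (ENNReal.toReal_lt_toReal ENNReal.ofReal_ne_top (measure_ne_top pos {p})).mpr hbig
      rwa [ENNReal.toReal_ofReal hε.le] at h2
    have h2 : (pos {p}).toReal ≤ ∫ x, f x ∂pos :=
      meas_le_integral' pos hpm _ (hint pos) hf0 (fun x hx => by
        rw [Set.mem_singleton_iff.mp hx]; exact hf1)
    have h3 : ∫ x, f x ∂neg ≤ (neg O).toReal :=
      integral_le_meas' neg hOo.measurableSet _ (hint neg) hfle
        (fun x hx => le_of_eq (hfz x hx))
    have h4 : (neg O).toReal ≤ ε / 4 := by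
      have he : neg O = neg (O \ {p}) := by
        conv_lhs => rw [← hOsub]
        rw [measure_union disjoint_sdiff_self_left hpm, hnegp, add_zero]
      rw [he]
      exact hannR neg (Or.inr rfl)
    have h5 : ε - ε / 4 ≤ sIntegral σ ⇑f := by
      rw [sIntegral, ← hpos, ← hneg]
      linarith
    have := le_abs_self (sIntegral σ ⇑f)
    linarith
end s

section generic

variable {α β : Type*} [TopologicalSpace α] [NormedAddCommGroup β] [NormedSpace ℝ β]

lemma c0_apply_le_norm' (f : C₀(α, β)) (x : α) : ‖f x‖ ≤ ‖f‖ := by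
  rw [← ZeroAtInftyContinuousMap.norm_toBCF_eq_norm]
  exact f.toBCF.norm_coe_le_norm x

lemma c0_norm_le' (f : C₀(α, β)) (C : ℝ) (hC : 0 ≤ C) (h : ∀ x, ‖f x‖ ≤ C) : ‖f‖ ≤ C := by
  rw [← ZeroAtInftyContinuousMap.norm_toBCF_eq_norm]
  exact BoundedContinuousFunction.norm_le hC |>.mpr h

/-- evaluation as a continuous linear map on `C₀`. -/
noncomputable def evalCLM (x : α) : C₀(α, β) →L[ℝ] β :=
  LinearMap.mkContinuous
    { toFun := fun f => f x
      map_add' := fun f g => by simp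
      map_smul' := fun c f => by simp }
    1 (fun f => by simpa using c0_apply_le_norm' f x)

@[simp] lemma evalCLM_apply (x : α) (f : C₀(α, β)) : (evalCLM x : C₀(α, β) →L[ℝ] β) f = f x :=
  rfl

end generic

section embed

variable {K X : Type*} [TopologicalSpace K] [MeasurableSpace K] [BorelSpace K]
  [NormedAddCommGroup X] [NormedSpace ℝ X]

lemma c0_integrable' (f : C₀(K, ℝ)) (m : Measure K) [IsFiniteMeasure m] :
    Integrable ⇑f m := f.toBCF.integrable m

set_option maxHeartbeats 1000000 in
lemma contains_c0 (ε : ℝ) (hε : 0 < ε) (W : C₀(K, ℝ) →L[ℝ] X)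
    (ψ : ℕ → StrongDual ℝ X) (hψn : ∀ j, ‖ψ j‖ ≤ 1)
    (σ : ℕ → SignedMeasure K)
    (hrep : ∀ j (f : C₀(K, ℝ)), ψ j (W f) = sIntegral (σ j) ⇑f)
    (V : ℕ → Set K) (hVo : ∀ j, IsOpen (V j)) (hVd : Pairwise (Function.onFun Disjoint V))
    (F : ℕ → C₀(K, ℝ)) (hF0 : ∀ j x, 0 ≤ F j x) (hF1 : ∀ j x, F j x ≤ 1)
    (hFz : ∀ j x, x ∉ V j → F j x = 0)
    (hlow : ∀ j, 3 * ε / 4 ≤ |sIntegral (σ j) ⇑(F j)|)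
    (hcross : ∀ j, ((σ j).totalVariation (⋃ i ∈ {i : ℕ | i ≠ j}, V i)) ≤ ENNReal.ofReal (ε / 16)) :
    ContainsC0Copy X := by
  classical
  -- summability of the basic series
  have hFnorm : ∀ (t : Finset ℕ) (b : ℕ → ℝ) (c : ℝ), 0 ≤ c → (∀ i ∈ t, |b i| ≤ c) →
      ‖∑ i ∈ t, b i • F i‖ ≤ c := by
    intro t b c hc hb
    apply c0_norm_le' _ _ hc
    intro x
    have hev : (∑ i ∈ t, b i • F i) x = ∑ i ∈ t, b i * F i x := by
      rw [← evalCLM_apply (β := ℝ) x, map_sum]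
      simp
    rw [hev]
    by_cases hx : ∃ i₀ ∈ t, x ∈ V i₀
    · obtain ⟨i₀, hi₀t, hi₀⟩ := hx
      rw [Finset.sum_eq_single_of_mem i₀ hi₀t (fun i hit hii => by
        rw [hFz i x (Set.disjoint_right.mp (hVd hii) hi₀), mul_zero])]
      rw [Real.norm_eq_abs, abs_mul]
      calc |b i₀| * |F i₀ x| ≤ c * 1 := by
            apply mul_le_mul (hb i₀ hi₀t) _ (abs_nonneg _) hc
            rw [abs_le]
            exact ⟨by linarith [hF0 i₀ x], hF1 i₀ x⟩
        _ = c := mul_one c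
    · push_neg at hx
      rw [Finset.sum_eq_zero (fun i hit => by rw [hFz i x (hx i hit), mul_zero])]
      simpa using hc
  have hsummable : ∀ a : C₀(ℕ, ℝ), Summable (fun i => a i • F i) := by
    intro a
    rw [summable_iff_vanishing]
    intro e he
    obtain ⟨δ, hδ, hball⟩ := Metric.mem_nhds_iff.mp he
    have hz : Tendsto (fun i => a i) atTop (𝓝 0) := by
      have := a.zero_at_infty'
      rwa [cocompact_eq_cofinite, Nat.cofinite_eq_atTop] at this
    have : ∀ᶠ i in atTop, |a i| < δ / 2 := by
      have := hz.eventually (Metric.ball_mem_nhds (0 : ℝ) (half_pos hδ))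
      filter_upwards [this] with i hi
      simpa [Real.dist_eq] using hi
    obtain ⟨N, hN⟩ := eventually_atTop.mp this
    refine ⟨Finset.range N, fun t ht => ?_⟩
    apply hball
    rw [Metric.mem_ball, dist_zero_right]
    have : ‖∑ i ∈ t, a i • F i‖ ≤ δ / 2 := by
      apply hFnorm t _ _ (by linarith)
      intro i hit
      have : N ≤ i := by
        by_contra hlt
        exact (Finset.disjoint_left.mp ht hit) (Finset.mem_range.mpr (by omega))
      exact (hN i this).le
    linarith
  set Φ : C₀(ℕ, ℝ) → C₀(K, ℝ) := fun a => ∑' i, a i • F i with hΦ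
  have hΦnorm : ∀ a, ‖Φ a‖ ≤ ‖a‖ := by
    intro a
    have h1 : Tendsto (fun t : Finset ℕ => ∑ i ∈ t, a i • F i) atTop (𝓝 (Φ a)) :=
      (hsummable a).hasSum
    refine le_of_tendsto h1.norm (Filter.Eventually.of_forall (fun t => ?_))
    exact hFnorm t _ _ (norm_nonneg a) (fun i _ => by
      simpa [Real.norm_eq_abs] using c0_apply_le_norm' a i)
  have hΦev : ∀ (a : C₀(ℕ, ℝ)) (x : K), Φ a x = ∑' i, a i * F i x := by
    intro a x
    rw [hΦ]
    have := (evalCLM (β := ℝ) x).map_tsum (hsummable a)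
    simpa using this
  have hΦadd : ∀ a b, Φ (a + b) = Φ a + Φ b := by
    intro a b
    show (∑' i, (a + b) i • F i) = (∑' i, a i • F i) + ∑' i, b i • F i
    rw [← Summable.tsum_add (hsummable a) (hsummable b)]
    apply tsum_congr
    intro i
    ext x
    simp only [ZeroAtInftyContinuousMap.add_apply, ZeroAtInftyContinuousMap.smul_apply,
      smul_eq_mul]
    ring
  have hΦsmul : ∀ (c : ℝ) a, Φ (c • a) = c • Φ a := by
    intro c a
    show (∑' i, (c • a) i • F i) = c • ∑' i, a i • F i
    rw [← Summable.tsum_const_smul c (hsummable a)]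
    apply tsum_congr
    intro i
    ext x
    simp only [ZeroAtInftyContinuousMap.smul_apply, smul_eq_mul]
    ring
  -- the candidate embedding
  set Smap : C₀(ℕ, ℝ) →ₗ[ℝ] X :=
    { toFun := fun a => W (Φ a)
      map_add' := fun a b => by
        show W (Φ (a + b)) = W (Φ a) + W (Φ b)
        rw [hΦadd, map_add]
      map_smul' := fun c a => by
        show W (Φ (c • a)) = c • W (Φ a)
        rw [hΦsmul]
        exact W.map_smul _ _ } with hSmap
  have hSbound : ∀ a, ‖Smap a‖ ≤ ‖W‖ * ‖a‖ := by
    intro a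
    calc ‖W (Φ a)‖ ≤ ‖W‖ * ‖Φ a‖ := W.le_opNorm _
      _ ≤ ‖W‖ * ‖a‖ := by
          apply mul_le_mul_of_nonneg_left (hΦnorm a) (norm_nonneg W)
  set S : C₀(ℕ, ℝ) →L[ℝ] X := LinearMap.mkContinuous Smap ‖W‖ hSbound with hS
  refine ⟨S, ε / 4, by linarith, ?_⟩
  intro a
  rcases eq_or_ne a 0 with rfl | ha
  · simp
  -- pick an index where |a j| is at least half the norm
  have hapos : 0 < ‖a‖ := norm_pos_iff.mpr ha
  obtain ⟨j, hj⟩ : ∃ j, ‖a‖ ≤ 2 * |a j| := by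
    by_contra hcon
    push_neg at hcon
    have : ‖a‖ ≤ ‖a‖ / 2 := by
      apply c0_norm_le' a _ (by linarith)
      intro i
      have := hcon i
      rw [Real.norm_eq_abs]
      linarith
    linarith
  -- the remainder
  set h : C₀(K, ℝ) := Φ a - a j • F j with hh
  set Bj : Set K := ⋃ i ∈ {i : ℕ | i ≠ j}, V i with hBj
  have hBjm : MeasurableSet Bj :=
    MeasurableSet.biUnion (Set.to_countable _) (fun i _ => (hVo i).measurableSet)
  have hhz : ∀ x ∉ Bj, h x = 0 := by
    intro x hx
    have hnot : ∀ i, i ≠ j → x ∉ V i := by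
      intro i hi hxV
      exact hx (Set.mem_biUnion hi hxV)
    rw [hh, ZeroAtInftyContinuousMap.sub_apply, hΦev]
    rw [tsum_eq_single j (fun i hi => by rw [hFz i x (hnot i hi), mul_zero])]
    simp
  have hhb : ∀ x, |h x| ≤ ‖a‖ := by
    intro x
    by_cases hx : x ∈ Bj
    · simp only [hBj, Set.mem_iUnion] at hx
      obtain ⟨i₀, hi₀, hxV⟩ := hx
      have hFj : F j x = 0 := hFz j x (Set.disjoint_left.mp (hVd hi₀) hxV)
      rw [hh, ZeroAtInftyContinuousMap.sub_apply, hΦev]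
      rw [tsum_eq_single i₀ (fun i hi => by
        rw [hFz i x (Set.disjoint_right.mp (hVd hi) hxV), mul_zero])]
      rw [ZeroAtInftyContinuousMap.smul_apply, hFj, smul_eq_mul, mul_zero, sub_zero, abs_mul]
      calc |a i₀| * |F i₀ x| ≤ ‖a‖ * 1 := by
            apply mul_le_mul _ _ (abs_nonneg _) (norm_nonneg a)
            · simpa [Real.norm_eq_abs] using c0_apply_le_norm' a i₀
            · rw [abs_le]; exact ⟨by linarith [hF0 i₀ x], hF1 i₀ x⟩
        _ = ‖a‖ := mul_one _
    · rw [hhz x hx]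
      simp [norm_nonneg a]
  -- the signed measure estimates
  set posj := (σ j).toJordanDecomposition.posPart with hposj
  set negj := (σ j).toJordanDecomposition.negPart with hnegj
  have hTVj : (σ j).totalVariation = posj + negj := rfl
  have hcrossR : ∀ (m : Measure K), m = posj ∨ m = negj → (m Bj).toReal ≤ ε / 16 := by
    rintro m hm
    have hle : m Bj ≤ (σ j).totalVariation Bj := by
      rw [hTVj, Measure.add_apply]
      rcases hm with rfl | rfl
      · exact le_add_right le_rfl
      · exact le_add_left le_rfl
    exact ENNReal.toReal_le_of_le_ofReal (by linarith) (hle.trans (hcross j))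
  have hintest : ∀ (m : Measure K), m = posj ∨ m = negj →
      |∫ x, h x ∂m| ≤ ‖a‖ * (ε / 16) := by
    rintro m hm
    haveI : IsFiniteMeasure m := by rcases hm with rfl | rfl <;> infer_instance
    have h1 : ∫ x, h x ∂m = ∫ x in Bj, h x ∂m :=
      (setIntegral_eq_integral_of_forall_compl_eq_zero (fun x hx => hhz x hx)).symm
    rw [h1]
    calc |∫ x in Bj, h x ∂m| ≤ ‖a‖ * (m Bj).toReal := by
          have := norm_setIntegral_le_of_norm_le_const (μ := m) (s := Bj)
            (f := fun x => h x) (C := ‖a‖) (measure_lt_top m Bj)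
            (fun x _ => by simpa [Real.norm_eq_abs] using hhb x)
          simpa [Real.norm_eq_abs, Measure.real] using this
      _ ≤ ‖a‖ * (ε / 16) := by
          apply mul_le_mul_of_nonneg_left (hcrossR m hm) (norm_nonneg a)
  have hsinth : |sIntegral (σ j) ⇑h| ≤ ‖a‖ * (ε / 8) := by
    rw [sIntegral]
    calc |∫ x, h x ∂posj - ∫ x, h x ∂negj| ≤ |∫ x, h x ∂posj| + |∫ x, h x ∂negj| :=
          abs_sub _ _
      _ ≤ ‖a‖ * (ε / 16) + ‖a‖ * (ε / 16) :=
          add_le_add (hintest posj (Or.inl rfl)) (hintest negj (Or.inr rfl))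
      _ = ‖a‖ * (ε / 8) := by ring
  have hsint : sIntegral (σ j) ⇑(Φ a) = a j * sIntegral (σ j) ⇑(F j) + sIntegral (σ j) ⇑h := by
    have hdecomp : Φ a = a j • F j + h := by rw [hh, add_sub_cancel]
    rw [hdecomp]
    have hcoe : ⇑(a j • F j + h) = fun x => a j * F j x + h x := by
      funext x
      rw [ZeroAtInftyContinuousMap.add_apply, ZeroAtInftyContinuousMap.smul_apply, smul_eq_mul]
    simp only [sIntegral, hcoe]
    rw [integral_add ((c0_integrable' (F j) posj).const_mul (a j)) (c0_integrable' h posj),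
      integral_add ((c0_integrable' (F j) negj).const_mul (a j)) (c0_integrable' h negj),
      integral_const_mul, integral_const_mul, ← hposj, ← hnegj]
    ring
  have hψS : ψ j (S a) = sIntegral (σ j) ⇑(Φ a) := by
    have hSa : S a = W (Φ a) := rfl
    rw [hSa, hrep]
  have hub : |ψ j (S a)| ≤ ‖S a‖ := by
    have h1 := (ψ j).le_opNorm (S a)
    rw [Real.norm_eq_abs] at h1
    calc |ψ j (S a)| ≤ ‖ψ j‖ * ‖S a‖ := h1
      _ ≤ 1 * ‖S a‖ := mul_le_mul_of_nonneg_right (hψn j) (norm_nonneg _)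
      _ = ‖S a‖ := one_mul _
  have hlb : ‖a‖ * (ε / 4) ≤ |sIntegral (σ j) ⇑(Φ a)| := by
    rw [hsint]
    have h1 : |a j * sIntegral (σ j) ⇑(F j) + sIntegral (σ j) ⇑h| ≥
        |a j| * |sIntegral (σ j) ⇑(F j)| - |sIntegral (σ j) ⇑h| := by
      have := abs_add_le (a j * sIntegral (σ j) ⇑(F j) + sIntegral (σ j) ⇑h)
        (-(sIntegral (σ j) ⇑h))
      rw [abs_neg, add_neg_cancel_right, abs_mul] at this
      linarith
    have h2 : |a j| * (3 * ε / 4) ≤ |a j| * |sIntegral (σ j) ⇑(F j)| :=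
      mul_le_mul_of_nonneg_left (hlow j) (abs_nonneg _)
    nlinarith [hsinth, abs_nonneg (a j)]
  calc ε / 4 * ‖a‖ = ‖a‖ * (ε / 4) := by ring
    _ ≤ |sIntegral (σ j) ⇑(Φ a)| := hlb
    _ = |ψ j (S a)| := by rw [hψS]
    _ ≤ ‖S a‖ := hub

end embed

end aux

open Set Filter in
set_option maxHeartbeats 1000000 in
/-- If `T : C₀(K) → C₀(L,X)` is an isomorphic embedding, `c₀ ↪̸ X`,
`ε > 0` and `y ∈ L`, then the set `K_y(ε) = ⋃_{φ ∈ S_{X*}} {x : |T*(φ·δ_y)|({x}) > ε}` is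
finite.  Here `μ φ` is the regular signed Borel measure on `K` representing the functional
`T*(φ·δ_y) : f ↦ φ((Tf)(y))` (Singer/Riesz representation), and `|·|` is total variation. -/
theorem stmt0 {K L X : Type*}
    [TopologicalSpace K] [LocallyCompactSpace K] [T2Space K]
    [MeasurableSpace K] [BorelSpace K]
    [TopologicalSpace L] [LocallyCompactSpace L] [T2Space L]
    [NormedAddCommGroup X] [NormedSpace ℝ X]
    (hX : ¬ ContainsC0Copy X)
    (T : C₀(K, ℝ) →L[ℝ] C₀(L, X))
    (hT : ∃ A > 0, ∀ f : C₀(K, ℝ), A * ‖f‖ ≤ ‖T f‖)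
    (ε : ℝ) (hε : 0 < ε) (y : L)
    (μ : StrongDual ℝ X → SignedMeasure K)
    (hreg : ∀ φ, (μ φ).totalVariation.Regular)
    (hrep : ∀ (φ : StrongDual ℝ X) (f : C₀(K, ℝ)), φ (T f y) = sIntegral (μ φ) f) :
    {x : K | ∃ φ : StrongDual ℝ X, ‖φ‖ = 1 ∧
      ENNReal.ofReal ε < (μ φ).totalVariation {x}}.Finite := by
  classical
  by_contra hfin
  have hinf : {x : K | ∃ φ : StrongDual ℝ X, ‖φ‖ = 1 ∧
      ENNReal.ofReal ε < (μ φ).totalVariation {x}}.Infinite := hfin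
  -- the evaluation functional composed with T
  set W : C₀(K, ℝ) →L[ℝ] X := (evalCLM (β := X) y).comp T with hW
  have hWf : ∀ f : C₀(K, ℝ), W f = T f y := fun f => rfl
  -- enumerate infinitely many bad points
  set e := hinf.natEmbedding _ with he
  set x0 : ℕ → K := fun i => (e i : K) with hx0
  have hx0inj : Function.Injective x0 := fun i i' h =>
    e.injective (Subtype.val_injective h)
  have hx0mem : ∀ i, ∃ φ : StrongDual ℝ X, ‖φ‖ = 1 ∧
      ENNReal.ofReal ε < (μ φ).totalVariation {x0 i} := fun i => (e i).2
  choose φ0 hφ0n hφ0big using hx0mem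
  -- separate the points by disjoint open sets
  obtain ⟨n1, U1, hn1inj, hU1o, hU1mem, hU1d⟩ := exists_separated_subseq x0 hx0inj
  set p1 : ℕ → K := fun i => x0 (n1 i) with hp1
  set φ1 : ℕ → StrongDual ℝ X := fun i => φ0 (n1 i) with hφ1
  set ν1 : ℕ → Measure K := fun i => (μ (φ1 i)).totalVariation with hν1
  have hbig1 : ∀ i, ENNReal.ofReal ε < ν1 i {p1 i} := fun i => hφ0big (n1 i)
  -- the functional bound on each signed measure
  have hsb : ∀ i (f : C₀(K, ℝ)), |sIntegral (μ (φ1 i)) ⇑f| ≤ ‖W‖ * ‖f‖ := by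
    intro i f
    rw [← hrep (φ1 i) f]
    have h1 := (φ1 i).le_opNorm (W f)
    rw [Real.norm_eq_abs, hφ0n (n1 i), one_mul] at h1
    calc |(φ1 i) (T f y)| = |(φ1 i) (W f)| := by rw [hWf]
      _ ≤ ‖W f‖ := h1
      _ ≤ ‖W‖ * ‖f‖ := W.le_opNorm f
  have hb : ∀ i, ν1 i Set.univ ≤ ENNReal.ofReal ‖W‖ := fun i =>
    variation_le_opNorm (μ (φ1 i)) (hreg _) ‖W‖ (norm_nonneg W) (hsb i)
  -- shrink the open sets using outer regularity
  have hshrink : ∀ i, ∃ O : Set K, IsOpen O ∧ p1 i ∈ O ∧ O ⊆ U1 i ∧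
      ν1 i (O \ {p1 i}) ≤ ENNReal.ofReal (ε / 4) := by
    intro i
    haveI := hreg (φ1 i)
    have hq : ENNReal.ofReal (ε / 4) ≠ 0 := by
      simp only [ne_eq, ENNReal.ofReal_eq_zero, not_le]
      positivity
    obtain ⟨O', hsub, hO'o, hlt⟩ := Set.exists_isOpen_lt_of_lt (μ := ν1 i) {p1 i}
      (ν1 i {p1 i} + ENNReal.ofReal (ε / 4))
      (ENNReal.lt_add_right (measure_ne_top _ _) hq)
    refine ⟨O' ∩ U1 i, hO'o.inter (hU1o i), ⟨hsub rfl, hU1mem i⟩, Set.inter_subset_right, ?_⟩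
    have hpm : MeasurableSet ({p1 i} : Set K) := isClosed_singleton.measurableSet
    have h1 : ν1 i ((O' ∩ U1 i) \ {p1 i}) ≤ ν1 i (O' \ {p1 i}) :=
      measure_mono (Set.diff_subset_diff_left Set.inter_subset_left)
    have h2 : ν1 i (O' \ {p1 i}) + ν1 i {p1 i} < ENNReal.ofReal (ε / 4) + ν1 i {p1 i} := by
      have hun : (O' \ {p1 i}) ∪ {p1 i} = O' :=
        Set.diff_union_of_subset (Set.singleton_subset_iff.mpr (hsub rfl))
      have := measure_union (μ := ν1 i)
        (disjoint_sdiff_self_left : Disjoint (O' \ {p1 i}) {p1 i}) hpm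
      rw [hun] at this
      rw [← this]
      calc ν1 i O' < ν1 i {p1 i} + ENNReal.ofReal (ε / 4) := hlt
        _ = ENNReal.ofReal (ε / 4) + ν1 i {p1 i} := add_comm _ _
    have h3 : ν1 i (O' \ {p1 i}) ≤ ENNReal.ofReal (ε / 4) :=
      le_of_lt ((ENNReal.add_lt_add_iff_right (measure_ne_top _ _)).mp h2)
    exact h1.trans h3
  choose O hOo hpO hOsub hOann using hshrink
  have hOd : Pairwise (Function.onFun Disjoint O) := fun i j hij =>
    ((hU1d hij).mono (hOsub i) (hOsub j))
  -- Urysohn bump functions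
  have hury : ∀ i, ∃ f : C₀(K, ℝ), f (p1 i) = 1 ∧ (∀ x, 0 ≤ f x) ∧ (∀ x, f x ≤ 1) ∧
      (∀ x ∉ O i, f x = 0) := by
    intro i
    obtain ⟨g, hg1, hg0, hgsupp, hgmem⟩ :=
      exists_continuous_one_zero_of_isCompact (isCompact_singleton (x := p1 i))
        (hOo i).isClosed_compl
        (disjoint_compl_right_iff_subset.mpr (Set.singleton_subset_iff.mpr (hpO i)))
    exact ⟨toC0 g hgsupp, hg1 rfl, fun x => (hgmem x).1, fun x => (hgmem x).2,
      fun x hx => hg0 hx⟩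
  choose f hf1 hf0 hfle hfz using hury
  -- Rosenthal's lemma
  obtain ⟨Sset, hSinf, hScross⟩ := rosenthal ν1 (ENNReal.ofReal ‖W‖) hb ENNReal.ofReal_ne_top
    O hOd (fun i => (hOo i).measurableSet) (ENNReal.ofReal (ε / 16))
    (ENNReal.ofReal_pos.mpr (by positivity))
  set r : ℕ → ℕ := fun j => (hSinf.natEmbedding _ j : ℕ) with hr
  have hrinj : Function.Injective r := fun j j' h =>
    (hSinf.natEmbedding _).injective (Subtype.val_injective h)
  have hrS : ∀ j, r j ∈ Sset := fun j => (hSinf.natEmbedding _ j).2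
  -- cross-term bound for the final sequence
  have hcross : ∀ j, (μ (φ1 (r j))).totalVariation (⋃ i ∈ {i : ℕ | i ≠ j}, O (r i)) ≤
      ENNReal.ofReal (ε / 16) := by
    intro j
    refine le_trans (measure_mono ?_) (hScross (r j) (hrS j))
    intro x hx
    simp only [Set.mem_iUnion, Set.mem_setOf_eq, exists_prop] at hx
    obtain ⟨i, hij, hxO⟩ := hx
    refine Set.mem_biUnion ⟨hrS i, ?_⟩ hxO
    simp only [Set.mem_singleton_iff]
    exact fun h => hij (hrinj h)
  -- lower bound for the diagonal terms
  have hlow : ∀ j, 3 * ε / 4 ≤ |sIntegral (μ (φ1 (r j))) ⇑(f (r j))| := by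
    intro j
    exact single_bound (μ (φ1 (r j))) ε hε (p1 (r j)) (O (r j)) (hOo (r j)) (hpO (r j))
      (f (r j)) (hf1 (r j)) (hf0 (r j)) (hfle (r j)) (hfz (r j)) (hbig1 (r j)) (hOann (r j))
  -- conclude via the c₀-embedding construction
  apply hX
  exact contains_c0 ε hε W (fun j => φ1 (r j)) (fun j => le_of_eq (hφ0n (n1 (r j))))
    (fun j => μ (φ1 (r j)))
    (fun j g => by rw [← hrep (φ1 (r j)) g, hWf])
    (fun j => O (r j)) (fun j => hOo (r j))
    (fun i j hij => hOd (fun h => hij (hrinj h)))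
    (fun j => f (r j)) (fun j => hf0 (r j)) (fun j => hfle (r j))
    (fun j => hfz (r j)) hlow hcross
end

section
/- Let K be a scattered compact Hausdorff space and X, Y Banach spaces with Y separable. If Y embeds isomorphically into C(K,X), then there exist a countable metrizable compact space K₀ and a separable closed subspace X₀ ⊆ X such that Y embeds isomorphically into C(K₀,X₀) and C(K₀,X₀) embeds isomorphically into C(K,X). -/
open MeasureTheory Topology

/-- A topological space is scattered if every nonempty subset has a point isolated in it. -/
def IsScattered (α : Type*) [TopologicalSpace α] : Prop :=
  ∀ S : Set α, S.Nonempty → ∃ x ∈ S, ∃ U : Set α, IsOpen U ∧ U ∩ S = {x}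

/-- The pair of embeddings `Y ↪ C(K₀, X₀)` and `C(K₀, X₀) ↪ C(K, X)` in the conclusion
of the metrizability lemma. -/
def FactorsThroughC (Y : Type*) [NormedAddCommGroup Y] [NormedSpace ℝ Y]
    (K : Type*) [TopologicalSpace K] [CompactSpace K]
    (X : Type*) [NormedAddCommGroup X] [NormedSpace ℝ X]
    (K₀ : Type*) [TopologicalSpace K₀] [CompactSpace K₀]
    (X₀ : Submodule ℝ X) : Prop :=
  EmbedsIso Y C(K₀, X₀) ∧ EmbedsIso C(K₀, X₀) C(K, X)

section Aux
open TopologicalSpace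

lemma isScattered_of_forall_closed {α : Type*} [TopologicalSpace α]
    (h : ∀ S : Set α, IsClosed S → S.Nonempty → ∃ x ∈ S, ∃ U : Set α, IsOpen U ∧ U ∩ S = {x}) :
    IsScattered α := by
  intro S hS
  obtain ⟨x, hx, U, hU, hUS⟩ := h (closure S) isClosed_closure hS.closure
  have hxU : x ∈ U := by
    have : x ∈ U ∩ closure S := hUS ▸ rfl
    exact this.1
  obtain ⟨y, hyU, hyS⟩ := mem_closure_iff.mp hx U hU hxU
  have hyx : y = x := by
    have : y ∈ U ∩ closure S := ⟨hyU, subset_closure hyS⟩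
    rw [hUS] at this; exact this
  refine ⟨x, hyx ▸ hyS, U, hU, ?_⟩
  apply Set.eq_singleton_iff_unique_mem.mpr
  refine ⟨⟨hxU, hyx ▸ hyS⟩, fun z hz => ?_⟩
  have : z ∈ U ∩ closure S := ⟨hz.1, subset_closure hz.2⟩
  rw [hUS] at this; exact this

lemma countable_of_isScattered {α : Type*} [TopologicalSpace α] [SecondCountableTopology α]
    (h : IsScattered α) : Countable α := by
  obtain ⟨V, D, hVc, hD, hVD⟩ :=
    exists_countable_union_perfect_of_isClosed (C := (Set.univ : Set α)) isClosed_univ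
  have hDe : D = ∅ := by
    by_contra hne
    obtain ⟨x, hx, U, hU, hUD⟩ := h D (Set.nonempty_iff_ne_empty.mpr hne)
    have hxU : x ∈ U := by
      have : x ∈ U ∩ D := hUD ▸ rfl
      exact this.1
    obtain ⟨y, hy, hyx⟩ := preperfect_iff_nhds.mp hD.acc x hx U (hU.mem_nhds hxU)
    rw [hUD] at hy
    exact hyx hy
  rw [hDe, Set.union_empty] at hVD
  rw [← Set.countable_univ_iff]
  exact hVD ▸ hVc

lemma isScattered_image {K L : Type*} [TopologicalSpace K] [CompactSpace K]
    [TopologicalSpace L] [T2Space L]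
    (hK : IsScattered K) {f : K → L} (hf : Continuous f) (hsurj : Function.Surjective f) :
    IsScattered L := by
  apply isScattered_of_forall_closed
  intro S hS hne
  -- minimal closed set mapping onto S
  set P : Set (Set K) := {F | IsClosed F ∧ f '' F = S} with hP
  have hmemP : f ⁻¹' S ∈ P := ⟨hS.preimage hf, Set.image_preimage_eq S hsurj⟩
  have hchaincond : ∀ c ⊆ P, IsChain (· ⊆ ·) c → c.Nonempty → ∃ lb ∈ P, ∀ s ∈ c, lb ⊆ s := by
    intro c hcP hchain hcne
    refine ⟨⋂₀ c, ⟨isClosed_sInter fun F hF => (hcP hF).1, ?_⟩, fun F hF => Set.sInter_subset_of_mem hF⟩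
    apply Set.Subset.antisymm
    · obtain ⟨F, hF⟩ := hcne
      calc f '' ⋂₀ c ⊆ f '' F := Set.image_mono (Set.sInter_subset_of_mem hF)
        _ = S := (hcP hF).2
    · intro y hy
      -- sets F ∩ f⁻¹ {y} for F ∈ c are nonempty compact closed, directed
      have hnonempty : ∀ F : c, (↑F ∩ f ⁻¹' {y}).Nonempty := by
        rintro ⟨F, hF⟩
        have : y ∈ f '' F := (hcP hF).2 ▸ hy
        obtain ⟨x, hx, hxy⟩ := this
        exact ⟨x, hx, hxy⟩
      have hne' : Nonempty c := hcne.to_subtype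
      have hclosed : ∀ F : c, IsClosed (↑F ∩ f ⁻¹' {y} : Set K) :=
        fun F => (hcP F.2).1.inter (isClosed_singleton.preimage hf)
      have hcompact : ∀ F : c, IsCompact (↑F ∩ f ⁻¹' {y} : Set K) :=
        fun F => (hclosed F).isCompact
      have hdir : Directed (· ⊇ ·) (fun F : c => (↑F ∩ f ⁻¹' {y} : Set K)) := by
        rintro ⟨F₁, h₁⟩ ⟨F₂, h₂⟩
        rcases hchain.total h₁ h₂ with hle | hle
        · exact ⟨⟨F₁, h₁⟩, Set.Subset.rfl, Set.inter_subset_inter_left _ hle⟩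
        · exact ⟨⟨F₂, h₂⟩, Set.inter_subset_inter_left _ hle, Set.Subset.rfl⟩
      obtain ⟨x, hx⟩ := IsCompact.nonempty_iInter_of_directed_nonempty_isCompact_isClosed
        _ hdir hnonempty hcompact hclosed
      refine ⟨x, ?_, ?_⟩
      · rw [Set.mem_sInter]
        intro F hF
        exact (Set.mem_iInter.mp hx ⟨F, hF⟩).1
      · exact (Set.mem_iInter.mp hx ⟨hcne.choose, hcne.choose_spec⟩).2
  obtain ⟨F₀, hsub, hmin⟩ := zorn_superset_nonempty P hchaincond _ hmemP
  obtain ⟨hF₀closed, hF₀img⟩ := hmin.prop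
  have hF₀ne : F₀.Nonempty := by
    rcases hne with ⟨y, hy⟩
    have : y ∈ f '' F₀ := hF₀img ▸ hy
    exact ⟨this.choose, this.choose_spec.1⟩
  obtain ⟨x, hxF, U, hU, hUF⟩ := hK F₀ hF₀ne
  have hxU : x ∈ U := by
    have : x ∈ U ∩ F₀ := hUF ▸ rfl
    exact this.1
  have hclosedsub : IsClosed (F₀ \ U) := hF₀closed.sdiff hU
  have himgne : f '' (F₀ \ U) ≠ S := by
    intro hEq
    have hsubset : F₀ ⊆ F₀ \ U := hmin.2 ⟨hclosedsub, hEq⟩ Set.diff_subset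
    exact (hsubset hxF).2 hxU
  obtain ⟨y, hyS, hynot⟩ : ∃ y ∈ S, y ∉ f '' (F₀ \ U) := by
    by_contra hc
    push_neg at hc
    refine himgne (Set.Subset.antisymm ?_ hc)
    rw [← hF₀img]
    exact Set.image_mono Set.diff_subset
  have hfx : y = f x := by
    have : y ∈ f '' F₀ := hF₀img ▸ hyS
    obtain ⟨w, hwF, hwy⟩ := this
    have hwU : w ∈ U := by
      by_contra hwU
      exact hynot ⟨w, ⟨hwF, hwU⟩, hwy⟩
    have : w ∈ U ∩ F₀ := ⟨hwU, hwF⟩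
    rw [hUF] at this
    rw [← hwy, this]
  have hVopen : IsOpen (f '' (F₀ \ U))ᶜ := (hf.isClosedMap _ hclosedsub).isOpen_compl
  refine ⟨f x, hfx ▸ hyS, (f '' (F₀ \ U))ᶜ, hVopen, ?_⟩
  apply Set.eq_singleton_iff_unique_mem.mpr
  constructor
  · exact ⟨hfx ▸ hynot, hfx ▸ hyS⟩
  · rintro z ⟨hzV, hzS⟩
    have : z ∈ f '' F₀ := hF₀img ▸ hzS
    obtain ⟨w, hwF, hwz⟩ := this
    have hwU : w ∈ U := by
      by_contra hwU
      exact hzV ⟨w, ⟨hwF, hwU⟩, hwz⟩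
    have : w ∈ U ∩ F₀ := ⟨hwU, hwF⟩
    rw [hUF] at this
    rw [← hwz, this]

lemma embedsIso_trans {Y Z W : Type*} [NormedAddCommGroup Y] [NormedSpace ℝ Y]
    [NormedAddCommGroup Z] [NormedSpace ℝ Z] [NormedAddCommGroup W] [NormedSpace ℝ W]
    (h₁ : EmbedsIso Y Z) (h₂ : EmbedsIso Z W) : EmbedsIso Y W := by
  obtain ⟨T₁, A₁, hA₁, hT₁⟩ := h₁
  obtain ⟨T₂, A₂, hA₂, hT₂⟩ := h₂
  refine ⟨T₂.comp T₁, A₂ * A₁, mul_pos hA₂ hA₁, fun u => ?_⟩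
  calc A₂ * A₁ * ‖u‖ = A₂ * (A₁ * ‖u‖) := by ring
    _ ≤ A₂ * ‖T₁ u‖ := mul_le_mul_of_nonneg_left (hT₁ u) hA₂.le
    _ ≤ ‖T₂ (T₁ u)‖ := hT₂ _
    _ = ‖(T₂.comp T₁) u‖ := rfl

lemma embedsIso_comp_homeomorph {K₁ K₂ : Type*} [TopologicalSpace K₁] [CompactSpace K₁]
    [TopologicalSpace K₂] [CompactSpace K₂] (h : K₁ ≃ₜ K₂)
    (Z : Type*) [NormedAddCommGroup Z] [NormedSpace ℝ Z] :
    EmbedsIso C(K₂, Z) C(K₁, Z) := by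
  refine ⟨LinearMap.mkContinuous
    { toFun := fun g => g.comp (h : C(K₁, K₂))
      map_add' := fun g₁ g₂ => ContinuousMap.ext fun s => rfl
      map_smul' := fun c g => ContinuousMap.ext fun s => rfl } 1 (fun g => ?_), 1, one_pos,
    fun g => ?_⟩
  · rw [one_mul]
    refine (ContinuousMap.norm_le _ (norm_nonneg g)).mpr fun s => ?_
    exact g.norm_coe_le_norm (h s)
  · rw [one_mul]
    refine (ContinuousMap.norm_le _ (norm_nonneg _)).mpr fun t => ?_
    have := (g.comp (h : C(K₁, K₂))).norm_coe_le_norm (h.symm t)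
    simpa using this

end Aux

open TopologicalSpace in
/-- If `K` is a scattered compact Hausdorff space, `Y` a separable Banach
space embedding isomorphically into `C(K,X)`, then there are a countable metrizable compact
space `K₀` and a separable closed subspace `X₀ ⊆ X` with
`Y ↪ C(K₀, X₀) ↪ C(K, X)`. -/
theorem stmt4 {K X Y : Type*}
    [TopologicalSpace K] [CompactSpace K] [T2Space K]
    [NormedAddCommGroup X] [NormedSpace ℝ X] [CompleteSpace X]
    [NormedAddCommGroup Y] [NormedSpace ℝ Y] [CompleteSpace Y]
    [TopologicalSpace.SeparableSpace Y]
    (hK : IsScattered K)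
    (hemb : EmbedsIso Y C(K, X)) :
    ∃ (K₀ : Type) (i₁ : TopologicalSpace K₀) (i₂ : @CompactSpace K₀ i₁),
      @TopologicalSpace.MetrizableSpace K₀ i₁ ∧ Countable K₀ ∧
      ∃ X₀ : Submodule ℝ X, IsClosed (X₀ : Set X) ∧
        TopologicalSpace.SeparableSpace X₀ ∧
        @FactorsThroughC Y _ _ K _ _ X _ _ K₀ i₁ i₂ X₀ := by
  classical
  obtain ⟨T, A, hA, hT⟩ := hemb
  obtain ⟨u, hu⟩ := TopologicalSpace.exists_dense_seq Y
  set Φ : K → (ℕ → X) := fun s n => T (u n) s with hΦdef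
  have hΦc : Continuous Φ := continuous_pi fun n => (T (u n)).continuous
  set Kb : Set (ℕ → X) := Set.range Φ with hKbdef
  haveI hKbCompact : CompactSpace ↥Kb := isCompact_iff_compactSpace.mp (isCompact_range hΦc)
  haveI : MetrizableSpace ↥Kb := inferInstance
  -- the quotient-type map
  set q : K → ↥Kb := fun s => ⟨Φ s, Set.mem_range_self s⟩ with hqdef
  have hqc : Continuous q := hΦc.subtype_mk _
  have hqsurj : Function.Surjective q := fun t => ⟨t.2.choose, Subtype.ext t.2.choose_spec⟩
  -- scatteredness and countability of Kb
  have hKbscat : IsScattered ↥Kb := isScattered_image hK hqc hqsurj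
  have hKbcount : Countable ↥Kb := by
    letI : MetricSpace ↥Kb := TopologicalSpace.metrizableSpaceMetric ↥Kb
    exact countable_of_isScattered hKbscat
  -- key: functions factor through q
  have hkey : ∀ (y : Y) (s t : K), Φ s = Φ t → T y s = T y t := by
    intro y s t hst
    have hcl : IsClosed {z : Y | T z s = T z t} :=
      isClosed_eq ((continuous_eval_const s).comp T.continuous)
        ((continuous_eval_const t).comp T.continuous)
    have hsub : Set.range u ⊆ {z : Y | T z s = T z t} := by
      rintro _ ⟨n, rfl⟩
      exact congrFun hst n
    have : Dense {z : Y | T z s = T z t} := hu.mono hsub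
    have huniv : {z : Y | T z s = T z t} = Set.univ := hcl.closure_eq ▸ this.closure_eq
    exact (huniv ▸ Set.mem_univ y : y ∈ {z : Y | T z s = T z t})
  -- the separable subspace
  set X₀ : Submodule ℝ X :=
    (Submodule.span ℝ (⋃ n, Set.range fun s : K => T (u n) s)).topologicalClosure with hX₀def
  have hX₀closed : IsClosed (X₀ : Set X) := Submodule.isClosed_topologicalClosure _
  have hmem : ∀ (y : Y) (s : K), T y s ∈ X₀ := by
    intro y s
    have hmaps : Set.MapsTo (fun z : Y => T z s) (Set.range u) (X₀ : Set X) := by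
      rintro _ ⟨n, rfl⟩
      exact Submodule.le_topologicalClosure _
        (Submodule.subset_span (Set.mem_iUnion.mpr ⟨n, Set.mem_range_self s⟩))
    have := map_mem_closure ((continuous_eval_const s).comp T.continuous)
      (hu y) hmaps
    rwa [hX₀closed.closure_eq] at this
  have hX₀sep : TopologicalSpace.SeparableSpace ↥X₀ := by
    have h1 : ∀ n : ℕ, TopologicalSpace.IsSeparable (Set.range fun s : K => T (u n) s) := by
      intro n
      exact (isCompact_range (T (u n)).continuous).isSeparable
    have h2 : TopologicalSpace.IsSeparable (⋃ n, Set.range fun s : K => T (u n) s) :=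
      TopologicalSpace.IsSeparable.iUnion h1
    have h3 : TopologicalSpace.IsSeparable
        (closure ((Submodule.span ℝ (⋃ n, Set.range fun s : K => T (u n) s) : Submodule ℝ X) : Set X)) :=
      (TopologicalSpace.IsSeparable.span h2).closure
    have h4 : TopologicalSpace.IsSeparable (X₀ : Set X) := by
      rwa [hX₀def, Submodule.topologicalClosure_coe]
    exact h4.separableSpace
  -- the embedding C(Kb, X₀) → C(K, X)
  have hJ : EmbedsIso C(↥Kb, ↥X₀) C(K, X) := by
    set Jlin : C(↥Kb, ↥X₀) →ₗ[ℝ] C(K, X) :=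
      { toFun := fun g => ContinuousMap.mk (fun s => (g (q s) : X))
          (continuous_subtype_val.comp (g.continuous.comp hqc))
        map_add' := fun g₁ g₂ => ContinuousMap.ext fun s => rfl
        map_smul' := fun c g => ContinuousMap.ext fun s => rfl } with hJlindef
    have hJbound : ∀ g : C(↥Kb, ↥X₀), ‖Jlin g‖ ≤ 1 * ‖g‖ := by
      intro g
      rw [one_mul]
      refine (ContinuousMap.norm_le _ (norm_nonneg g)).mpr fun s => ?_
      have h1 : ‖(Jlin g) s‖ = ‖g (q s)‖ := by
        show ‖(g (q s) : X)‖ = ‖g (q s)‖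
        exact (Submodule.coe_norm _).symm
      rw [h1]
      exact g.norm_coe_le_norm (q s)
    refine ⟨Jlin.mkContinuous 1 hJbound, 1, one_pos, fun g => ?_⟩
    rw [one_mul]
    refine (ContinuousMap.norm_le _ (norm_nonneg _)).mpr fun t => ?_
    obtain ⟨s, rfl⟩ := hqsurj t
    have h1 : ‖g (q s)‖ = ‖(Jlin g) s‖ := by
      show ‖g (q s)‖ = ‖(g (q s) : X)‖
      exact Submodule.coe_norm _
    rw [h1]
    exact (Jlin g).norm_coe_le_norm s
  -- the embedding Y → C(Kb, X₀)
  have hS : EmbedsIso Y C(↥Kb, ↥X₀) := by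
    set pt : ↥Kb → K := fun t => t.2.choose with hptdef
    have hpt : ∀ t : ↥Kb, Φ (pt t) = ↑t := fun t => t.2.choose_spec
    have hptq : ∀ (y : Y) (s : K), T y (pt (q s)) = T y s := by
      intro y s
      exact hkey y _ s (by rw [hpt (q s)])
    set g : Y → ↥Kb → ↥X₀ := fun y t => ⟨T y (pt t), hmem y (pt t)⟩ with hgdef
    have hgc : ∀ y : Y, Continuous (g y) := by
      intro y
      have hq' := IsQuotientMap.of_surjective_continuous hqsurj hqc
      rw [hq'.continuous_iff]
      have : (g y) ∘ q = fun s => (⟨T y s, hmem y s⟩ : ↥X₀) := by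
        funext s
        exact Subtype.ext (hptq y s)
      rw [this]
      exact (T y).continuous.subtype_mk _
    set Slin : Y →ₗ[ℝ] C(↥Kb, ↥X₀) :=
      { toFun := fun y => ContinuousMap.mk (g y) (hgc y)
        map_add' := fun y₁ y₂ => ContinuousMap.ext fun t => Subtype.ext (by simp [hgdef])
        map_smul' := fun c y => ContinuousMap.ext fun t => Subtype.ext (by simp [hgdef]) }
      with hSlindef
    have hbound : ∀ y : Y, ‖Slin y‖ ≤ ‖T‖ * ‖y‖ := by
      intro y
      refine (ContinuousMap.norm_le _ (by positivity)).mpr fun t => ?_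
      calc ‖g y t‖ = ‖T y (pt t)‖ := rfl
        _ ≤ ‖T y‖ := (T y).norm_coe_le_norm (pt t)
        _ ≤ ‖T‖ * ‖y‖ := T.le_opNorm y
    refine ⟨Slin.mkContinuous ‖T‖ hbound, A, hA, fun y => ?_⟩
    calc A * ‖y‖ ≤ ‖T y‖ := hT y
      _ ≤ ‖Slin y‖ := by
          refine (ContinuousMap.norm_le _ (norm_nonneg _)).mpr fun s => ?_
          have h0 : (((Slin y) (q s) : ↥X₀) : X) = T y s := hptq y s
          have h1 : ‖T y s‖ = ‖(Slin y) (q s)‖ := by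
            rw [← h0, Submodule.coe_norm]
          rw [h1]
          exact (Slin y).norm_coe_le_norm (q s)
      _ = ‖(Slin.mkContinuous ‖T‖ hbound) y‖ := rfl
  -- now fix the universe: a Type 0 model of Kb
  obtain ⟨fN, hfN⟩ := hKbcount.exists_injective_nat'
  set K₀ : Type := ↥(Set.range fN) with hK₀def
  set e : ↥Kb ≃ K₀ := Equiv.ofInjective fN hfN with hedef
  letI i₁ : TopologicalSpace K₀ := TopologicalSpace.induced e.symm inferInstance
  have hhomeo : K₀ ≃ₜ ↥Kb := Equiv.toHomeomorphOfIsInducing e.symm ⟨rfl⟩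
  haveI i₂ : CompactSpace K₀ := hhomeo.symm.compactSpace
  refine ⟨K₀, i₁, i₂, ?_, ?_, X₀, hX₀closed, hX₀sep, ?_, ?_⟩
  · exact hhomeo.isEmbedding.metrizableSpace
  · exact Function.Injective.countable (f := fun t : K₀ => (t : ℕ)) Subtype.coe_injective
  · exact embedsIso_trans hS (embedsIso_comp_homeomorph hhomeo ↥X₀)
  · exact embedsIso_trans (embedsIso_comp_homeomorph hhomeo.symm ↥X₀) hJ
end

section
/- Every non-scattered compact Hausdorff space admits a continuous surjection onto the unit interval [0,1]. -/
open Topology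

lemma exists_binary_digits (y : ℝ) (hy : y ∈ Set.Icc (0:ℝ) 1) :
    ∃ σ : ℕ → Bool, HasSum (fun n => (if σ n then (1:ℝ) else 0) * (2:ℝ)⁻¹ ^ (n+1)) y := by
  set rem : ℕ → ℝ := fun n =>
    Nat.rec y (fun k r => if (2:ℝ)⁻¹ ^ (k+1) ≤ r then r - (2:ℝ)⁻¹ ^ (k+1) else r) n with hrem
  have hrem0 : rem 0 = y := rfl
  have hremS : ∀ n, rem (n+1) =
      if (2:ℝ)⁻¹ ^ (n+1) ≤ rem n then rem n - (2:ℝ)⁻¹ ^ (n+1) else rem n := fun n => rfl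
  set σ : ℕ → Bool := fun n => decide ((2:ℝ)⁻¹ ^ (n+1) ≤ rem n) with hσ
  have hinv : ∀ n, 0 ≤ rem n ∧ rem n ≤ (2:ℝ)⁻¹ ^ n := by
    intro n
    induction n with
    | zero => simpa [hrem0] using hy
    | succ n ih =>
      rw [hremS]
      split_ifs with h
      · constructor
        · linarith
        · have : (2:ℝ)⁻¹ ^ n = (2:ℝ)⁻¹ ^ (n+1) + (2:ℝ)⁻¹ ^ (n+1) := by
            rw [pow_succ]; ring
          linarith [ih.2]
      · exact ⟨ih.1, le_of_not_ge h⟩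
  have hsum : ∀ n, ∑ k ∈ Finset.range n, (if σ k then (1:ℝ) else 0) * (2:ℝ)⁻¹ ^ (k+1)
      = y - rem n := by
    intro n
    induction n with
    | zero => simp [hrem0]
    | succ n ih =>
      rw [Finset.sum_range_succ, ih, hremS]
      simp only [hσ, decide_eq_true_eq]
      split_ifs with h <;> simp <;> ring
  refine ⟨σ, ?_⟩
  rw [hasSum_iff_tendsto_nat_of_nonneg]
  · have h1 : Filter.Tendsto rem Filter.atTop (nhds 0) := by
      have := tendsto_pow_atTop_nhds_zero_of_lt_one (by norm_num : (0:ℝ) ≤ 2⁻¹)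
        (by norm_num : (2:ℝ)⁻¹ < 1)
      exact squeeze_zero (fun n => (hinv n).1) (fun n => (hinv n).2) this
    have : Filter.Tendsto (fun n => y - rem n) Filter.atTop (nhds (y - 0)) :=
      Filter.Tendsto.sub tendsto_const_nhds h1
    simp only [sub_zero] at this
    exact (Filter.Tendsto.congr (fun n => (hsum n).symm) this)
  · intro i
    positivity

/-- Every non-scattered compact Hausdorff space admits a continuous
surjection onto `[0,1]`. -/
theorem stmt9 {K : Type*} [TopologicalSpace K] [CompactSpace K] [T2Space K]
    (hK : ¬ IsScattered K) :
    ∃ φ : K → ℝ, Continuous φ ∧ Set.range φ = Set.Icc (0 : ℝ) 1 := by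
  -- Step 1: a nonempty perfect closed set
  rw [IsScattered] at hK
  push_neg at hK
  obtain ⟨S, hSne, hS⟩ := hK
  have hpre : Preperfect S := by
    intro x hxS
    rw [accPt_iff_nhds]
    intro U hU
    obtain ⟨V, hVU, hVopen, hxV⟩ := mem_nhds_iff.mp hU
    have hne : V ∩ S ≠ {x} := hS x hxS V hVopen
    have hsub : {x} ⊆ V ∩ S := Set.singleton_subset_iff.mpr ⟨hxV, hxS⟩
    obtain ⟨y, hyVS, hyx⟩ := Set.exists_of_ssubset (hsub.ssubset_of_ne (Ne.symm hne))
    exact ⟨y, ⟨hVU hyVS.1, hyVS.2⟩, fun h => hyx (h ▸ rfl)⟩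
  have hCperf : Perfect (closure S) := preperfect_iff_perfect_closure.mp hpre
  have hCne : (closure S).Nonempty := hSne.closure
  -- Step 2: splitting scheme
  have split : ∀ D : {D : Set K // Perfect D ∧ D.Nonempty},
      ∃ p : Bool → {D : Set K // Perfect D ∧ D.Nonempty},
        (∀ b, (p b).1 ⊆ D.1) ∧ Disjoint (p false).1 (p true).1 := by
    rintro ⟨D, hD, hDne⟩
    obtain ⟨C₀, C₁, ⟨h0p, h0ne, h0sub⟩, ⟨h1p, h1ne, h1sub⟩, hdisj⟩ := hD.splitting hDne
    exact ⟨fun b => if b then ⟨C₁, h1p, h1ne⟩ else ⟨C₀, h0p, h0ne⟩,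
      by rintro (_|_) <;> simpa, by simpa⟩
  choose p hpsub hpdisj using split
  -- the scheme indexed by lists (head = deepest level)
  let F : List Bool → {D : Set K // Perfect D ∧ D.Nonempty} :=
    fun l => l.rec ⟨closure S, hCperf, hCne⟩ (fun b _ ih => p ih b)
  have hFcons : ∀ b l, F (b :: l) = p (F l) b := fun _ _ => rfl
  have hFsub : ∀ b l, (F (b :: l)).1 ⊆ (F l).1 := fun b l => hpsub (F l) b
  have hFdisj : ∀ l m : List Bool, l.length = m.length → l ≠ m →
      Disjoint (F l).1 (F m).1 := by
    intro l
    induction l with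
    | nil => intro m hlen hne; cases m <;> simp_all
    | cons b l ih =>
      intro m hlen hne
      cases m with
      | nil => simp at hlen
      | cons c m =>
        simp only [List.length_cons, Nat.add_right_cancel_iff] at hlen
        by_cases hlm : l = m
        · subst hlm
          have hbc : b ≠ c := by intro h; exact hne (by rw [h])
          cases b <;> cases c
          · exact absurd rfl hbc
          · exact hpdisj (F l)
          · exact (hpdisj (F l)).symm
          · exact absurd rfl hbc
        · exact Set.disjoint_of_subset (hFsub b l) (hFsub c m) (ih m hlen hlm)
  -- branches
  let branch : (ℕ → Bool) → ℕ → List Bool := fun σ n => Nat.rec [] (fun k ih => σ k :: ih) n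
  have hbranch_len : ∀ σ n, (branch σ n).length = n := by
    intro σ n; induction n with
    | zero => rfl
    | succ n ih => simpa [branch] using ih
  have hbranchS : ∀ σ n, branch σ (n+1) = σ n :: branch σ n := fun _ _ => rfl
  -- level sets
  let A : ℕ → Set K := fun n => ⋃ l ∈ {l : List Bool | l.length = n}, (F (false :: l)).1
  let B : ℕ → Set K := fun n => ⋃ l ∈ {l : List Bool | l.length = n}, (F (true :: l)).1
  have hclosedF : ∀ l, IsClosed (F l).1 := fun l => (F l).2.1.closed
  have hAclosed : ∀ n, IsClosed (A n) :=
    fun n => (List.finite_length_eq Bool n).isClosed_biUnion (fun l _ => hclosedF (false :: l))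
  have hBclosed : ∀ n, IsClosed (B n) :=
    fun n => (List.finite_length_eq Bool n).isClosed_biUnion (fun l _ => hclosedF (true :: l))
  have hABdisj : ∀ n, Disjoint (A n) (B n) := by
    intro n
    rw [Set.disjoint_left]
    rintro x hxA hxB
    simp only [A, B, Set.mem_iUnion, Set.mem_setOf_eq] at hxA hxB
    obtain ⟨l, hl, hxl⟩ := hxA
    obtain ⟨m, hm, hxm⟩ := hxB
    exact (hFdisj (false :: l) (true :: m) (by simp [hl, hm]) (by simp)).ne_of_mem hxl hxm rfl
  -- Urysohn functions
  have urysohn : ∀ n, ∃ f : C(K, ℝ), Set.EqOn f 0 (A n) ∧ Set.EqOn f 1 (B n) ∧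
      ∀ x, f x ∈ Set.Icc (0:ℝ) 1 :=
    fun n => exists_continuous_zero_one_of_isClosed (hAclosed n) (hBclosed n) (hABdisj n)
  choose f hf0 hf1 hf01 using urysohn
  -- the map
  set φ : K → ℝ := fun x => ∑' n, (2:ℝ)⁻¹ ^ (n+1) * f n x with hφ
  have hsummable_geo : Summable (fun n : ℕ => (2:ℝ)⁻¹ ^ (n+1)) := by
    have h := (summable_geometric_of_lt_one (r := (2:ℝ)⁻¹) (by norm_num) (by norm_num)).mul_left 2⁻¹
    exact h.congr (fun n => by rw [pow_succ]; ring)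
  have hterm_bound : ∀ n x, ‖(2:ℝ)⁻¹ ^ (n+1) * f n x‖ ≤ (2:ℝ)⁻¹ ^ (n+1) := by
    intro n x
    rw [norm_mul, norm_pow]
    have h1 : |(f n) x| ≤ 1 := abs_le.mpr ⟨by linarith [(hf01 n x).1], (hf01 n x).2⟩
    calc ‖(2:ℝ)⁻¹‖ ^ (n+1) * ‖f n x‖ ≤ ‖(2:ℝ)⁻¹‖ ^ (n+1) * 1 := by
          apply mul_le_mul_of_nonneg_left _ (by positivity)
          simpa [Real.norm_eq_abs] using h1
      _ = (2:ℝ)⁻¹ ^ (n+1) := by norm_num [Real.norm_eq_abs]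
  have hφcont : Continuous φ := by
    apply continuous_tsum (fun n => (continuous_const.mul (f n).continuous)) hsummable_geo
    exact fun n x => hterm_bound n x
  have hsummable : ∀ x, Summable (fun n => (2:ℝ)⁻¹ ^ (n+1) * f n x) := by
    intro x
    apply Summable.of_norm
    exact hsummable_geo.of_nonneg_of_le (fun n => norm_nonneg _) (fun n => hterm_bound n x)
  have htsum_geo : ∑' n : ℕ, (2:ℝ)⁻¹ ^ (n+1) = 1 := by
    have : ∀ n : ℕ, (2:ℝ)⁻¹ ^ (n+1) = (2:ℝ)⁻¹ * (2:ℝ)⁻¹ ^ n := fun n => by rw [pow_succ]; ring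
    rw [tsum_congr this, tsum_mul_left, tsum_geometric_of_lt_one (by norm_num) (by norm_num)]
    norm_num
  refine ⟨φ, hφcont, Set.Subset.antisymm ?_ ?_⟩
  · rintro _ ⟨x, rfl⟩
    constructor
    · apply tsum_nonneg
      intro n
      have := (hf01 n x).1
      positivity
    · rw [← htsum_geo]
      apply Summable.tsum_le_tsum _ (hsummable x) hsummable_geo
      intro n
      have h2 := (hf01 n x).2
      have : (2:ℝ)⁻¹ ^ (n+1) * f n x ≤ (2:ℝ)⁻¹ ^ (n+1) * 1 :=
        mul_le_mul_of_nonneg_left h2 (by positivity)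
      simpa using this
  · intro y hy
    obtain ⟨σ, hσsum⟩ := exists_binary_digits y hy
    -- point in the branch intersection
    set t : ℕ → Set K := fun n => (F (branch σ n)).1 with ht
    have htsub : ∀ n, t (n+1) ⊆ t n := by
      intro n; exact hFsub (σ n) (branch σ n)
    have htx : (⋂ n, t n).Nonempty := by
      apply IsCompact.nonempty_iInter_of_sequence_nonempty_isCompact_isClosed t htsub
        (fun n => (F (branch σ n)).2.2) ((hclosedF (branch σ 0)).isCompact)
        (fun n => hclosedF (branch σ n))
    obtain ⟨x, hx⟩ := htx
    refine ⟨x, ?_⟩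
    have hfval : ∀ n, f n x = if σ n then 1 else 0 := by
      intro n
      have hxn : x ∈ (F (σ n :: branch σ n)).1 := by
        exact Set.mem_iInter.mp hx (n+1)
      cases hσn : σ n with
      | false =>
        have : x ∈ A n := Set.mem_biUnion (hbranch_len σ n) (by rwa [hσn] at hxn)
        simpa using hf0 n this
      | true =>
        have : x ∈ B n := Set.mem_biUnion (hbranch_len σ n) (by rwa [hσn] at hxn)
        simpa using hf1 n this
    have : HasSum (fun n => (2:ℝ)⁻¹ ^ (n+1) * f n x) y := by
      apply HasSum.congr_fun hσsum
      intro n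
      rw [hfval n]
      ring
    exact this.tsum_eq
end

section
/- Let K be a locally compact Hausdorff space, X a Banach space, T : C₀(K) → C₀(L,X) a bounded linear operator, y ∈ L, and (f_n) a sequence in C₀(K) with 0 ≤ f_n ≤ 1 and pairwise disjoint supports. Then the map S : c₀ → X defined by S((a_n)_n) = T(Σ_n a_n f_n)(y) is a well-defined bounded linear operator with ‖S‖ ≤ ‖T‖. -/
open Topology ZeroAtInfty

section aux

variable {K : Type*} [TopologicalSpace K]

/-- Finite sums of scalars times functions with disjoint supports, where the scalars
are bounded by `C`, have sup-norm at most `C`. -/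
lemma stmt16_finset_norm_le (f : ℕ → C₀(K, ℝ))
    (hf01 : ∀ n (x : K), 0 ≤ f n x ∧ f n x ≤ 1)
    (hdisj : Pairwise (Function.onFun Disjoint (fun n => Function.support (f n))))
    (a : ℕ → ℝ) (t : Finset ℕ) {C : ℝ} (hC : 0 ≤ C) (ha : ∀ n ∈ t, |a n| ≤ C) :
    ‖∑ n ∈ t, a n • f n‖ ≤ C := by
  rw [← ZeroAtInftyContinuousMap.norm_toBCF_eq_norm]
  refine BoundedContinuousFunction.norm_le hC |>.2 fun x => ?_
  have hx : (∑ n ∈ t, a n • f n : C₀(K, ℝ)).toBCF x = ∑ n ∈ t, a n * f n x := by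
    induction t using Finset.induction with
    | empty => simp
    | insert _ _ h ih => simp_all [Finset.sum_insert h]
  rw [hx]
  by_cases h : ∃ n₀ ∈ t, f n₀ x ≠ 0
  · obtain ⟨n₀, hn₀t, hn₀⟩ := h
    have hsum : ∑ n ∈ t, a n * f n x = a n₀ * f n₀ x := by
      refine Finset.sum_eq_single n₀ (fun n hn hne => ?_) (fun h => absurd hn₀t h)
      have : f n x = 0 := by
        by_contra hfx
        exact (hdisj hne).le_bot ⟨hfx, hn₀⟩
      simp [this]
    rw [hsum, Real.norm_eq_abs, abs_mul]
    calc |a n₀| * |f n₀ x| ≤ C * 1 := by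
          refine mul_le_mul (ha n₀ hn₀t) ?_ (abs_nonneg _) hC
          rw [abs_of_nonneg (hf01 n₀ x).1]; exact (hf01 n₀ x).2
      _ = C := mul_one C
  · push_neg at h
    have : ∑ n ∈ t, a n * f n x = 0 := Finset.sum_eq_zero fun n hn => by simp [h n hn]
    rw [this]; simpa using hC

lemma stmt16_summable (f : ℕ → C₀(K, ℝ))
    (hf01 : ∀ n (x : K), 0 ≤ f n x ∧ f n x ≤ 1)
    (hdisj : Pairwise (Function.onFun Disjoint (fun n => Function.support (f n))))
    (a : C₀(ℕ, ℝ)) :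
    Summable (fun n => a n • f n) := by
  rw [summable_iff_vanishing]
  intro e he
  obtain ⟨ε, hε, hball⟩ := Metric.mem_nhds_iff.1 he
  have hz : Filter.Tendsto a Filter.cofinite (𝓝 0) := by
    have := zero_at_infty a
    rwa [Filter.cocompact_eq_cofinite] at this
  have hfin : ∀ᶠ n in Filter.cofinite, |a n| < ε / 2 := by
    have := hz (Metric.ball_mem_nhds (0:ℝ) (show (0:ℝ) < ε/2 by positivity))
    filter_upwards [this] with n hn
    simpa [Real.dist_eq] using hn
  rw [Filter.eventually_cofinite] at hfin
  refine ⟨hfin.toFinset, fun t ht => hball ?_⟩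
  rw [Metric.mem_ball, dist_zero_right]
  have hle : ‖∑ n ∈ t, a n • f n‖ ≤ ε / 2 := by
    refine stmt16_finset_norm_le f hf01 hdisj a t (by positivity) fun n hn => ?_
    have : n ∉ hfin.toFinset := fun hmem => (Finset.disjoint_left.1 ht hn) hmem
    simp only [Set.Finite.mem_toFinset, Set.mem_setOf_eq, not_not] at this
    exact this.le
  linarith

end aux

/-- Given a bounded operator `T : C₀(K) → C₀(L,X)`, a point `y ∈ L`, and
functions `fₙ ∈ C₀(K)` with `0 ≤ fₙ ≤ 1` and pairwise disjoint supports, the map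
`S : c₀ → X`, `S((aₙ)) = T(Σₙ aₙ fₙ)(y)` is a well-defined bounded linear operator with
`‖S‖ ≤ ‖T‖` (the series `Σₙ aₙ fₙ` converging in `C₀(K)` for every `(aₙ) ∈ c₀`). -/
theorem stmt16 {K L X : Type*}
    [TopologicalSpace K] [LocallyCompactSpace K] [T2Space K]
    [TopologicalSpace L] [LocallyCompactSpace L] [T2Space L]
    [NormedAddCommGroup X] [NormedSpace ℝ X] [CompleteSpace X]
    (T : C₀(K, ℝ) →L[ℝ] C₀(L, X)) (y : L)
    (f : ℕ → C₀(K, ℝ))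
    (hf01 : ∀ n (x : K), 0 ≤ f n x ∧ f n x ≤ 1)
    (hdisj : Pairwise (Function.onFun Disjoint (fun n => Function.support (f n)))) :
    ∃ S : C₀(ℕ, ℝ) →L[ℝ] X, ‖S‖ ≤ ‖T‖ ∧
      ∀ a : C₀(ℕ, ℝ), ∃ g : C₀(K, ℝ),
        HasSum (fun n => a n • f n) g ∧ S a = T g y := by
  have hsum : ∀ a : C₀(ℕ, ℝ), Summable (fun n => a n • f n) :=
    fun a => stmt16_summable f hf01 hdisj a
  set g : C₀(ℕ, ℝ) → C₀(K, ℝ) := fun a => ∑' n, a n • f n with hg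
  have hgsum : ∀ a, HasSum (fun n => a n • f n) (g a) := fun a => (hsum a).hasSum
  have hgnorm : ∀ a, ‖g a‖ ≤ ‖a‖ := by
    intro a
    refine le_of_tendsto ((continuous_norm.tendsto _).comp (hgsum a)) ?_
    filter_upwards with t
    refine stmt16_finset_norm_le f hf01 hdisj a t (norm_nonneg a) fun n _ => ?_
    have : ‖a n‖ ≤ ‖a.toBCF‖ := a.toBCF.norm_coe_le_norm n
    rwa [ZeroAtInftyContinuousMap.norm_toBCF_eq_norm, Real.norm_eq_abs] at this
  have hadd : ∀ a b : C₀(ℕ, ℝ), g (a + b) = g a + g b := by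
    intro a b
    have : (fun n => (a + b) n • f n) = fun n => a n • f n + b n • f n := by
      funext n
      simp only [ZeroAtInftyContinuousMap.coe_add, Pi.add_apply]
      exact add_smul (a n) (b n) (f n)
    rw [hg]; simp only [this]
    exact ((hgsum a).add (hgsum b)).tsum_eq
  have hsmul : ∀ (c : ℝ) (a : C₀(ℕ, ℝ)), g (c • a) = c • g a := by
    intro c a
    have : (fun n => (c • a) n • f n) = fun n => c • (a n • f n) := by
      funext n
      simp only [ZeroAtInftyContinuousMap.coe_smul, Pi.smul_apply, smul_eq_mul]
      exact mul_smul c (a n) (f n)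
    rw [hg]; simp only [this]
    exact ((hgsum a).const_smul c).tsum_eq
  let Slin : C₀(ℕ, ℝ) →ₗ[ℝ] X :=
    { toFun := fun a => T (g a) y
      map_add' := fun a b => by show T (g (a + b)) y = T (g a) y + T (g b) y; rw [hadd]; simp
      map_smul' := fun c a => by show T (g (c • a)) y = c • T (g a) y; rw [hsmul]; simp }
  have hbound : ∀ a, ‖Slin a‖ ≤ ‖T‖ * ‖a‖ := by
    intro a
    calc ‖T (g a) y‖ ≤ ‖T (g a)‖ := by
          have := (T (g a)).toBCF.norm_coe_le_norm y
          rwa [ZeroAtInftyContinuousMap.norm_toBCF_eq_norm] at this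
      _ ≤ ‖T‖ * ‖g a‖ := T.le_opNorm _
      _ ≤ ‖T‖ * ‖a‖ := by
          exact mul_le_mul_of_nonneg_left (hgnorm a) (norm_nonneg T)
  refine ⟨Slin.mkContinuous ‖T‖ hbound, ?_, fun a => ⟨g a, hgsum a, rfl⟩⟩
  exact Slin.mkContinuous_norm_le (norm_nonneg T) hbound
end
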